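/- arXiv:1512.07025 — 12 statements merged into one kernel-verified Lean document; each statement's English description precedes it below -/
import Mathlib

section
/- Let W and Y be two sequences satisfying the same second-order recurrence: W = W(a₀,a₁) and Y = W(b₀,b₁). Then for all integers s, i, and j, one has W_{s+i}·Y_{s+j} − W_s·Y_{s+i+j} = (−c₂)^s · (W₁·Y_j − W₀·Y_{j+1}) · U_i. -/
lemma geom_aux (r : ℝ) (hr : r ≠ 0) (f : ℤ → ℝ)
    (hf : ∀ s : ℤ, f (s + 1) = r * f s) : ∀ s : ℤ, f s = r ^ s * f 0 := by
  intro s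
  induction s using Int.induction_on with
  | zero => simp
  | succ k ih => rw [hf, ih, zpow_add_one₀ hr]; ring
  | pred k ih =>
    have h := hf (-(k : ℤ) - 1)
    have e : (-(k : ℤ) - 1 + 1) = -k := by ring
    rw [e] at h
    have h' : f (-(k : ℤ) - 1) = f (-(k : ℤ)) / r := by rw [h]; field_simp
    rw [h', ih, zpow_sub_one₀ hr]; ring

lemma uniq_aux (c₁ c₂ : ℝ) (hc₂ : c₂ ≠ 0) (f g : ℤ → ℝ)
    (hf : ∀ n : ℤ, f n = c₁ * f (n - 1) + c₂ * f (n - 2))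
    (hg : ∀ n : ℤ, g n = c₁ * g (n - 1) + c₂ * g (n - 2))
    (h0 : f 0 = g 0) (h1 : f 1 = g 1) : ∀ n : ℤ, f n = g n := by
  have key : ∀ n : ℤ, f n = g n ∧ f (n + 1) = g (n + 1) := by
    intro n
    induction n using Int.induction_on with
    | zero => exact ⟨h0, by simpa using h1⟩
    | succ k ih =>
      refine ⟨ih.2, ?_⟩
      have e1 : ((k : ℤ) + 1 + 1 - 1) = k + 1 := by ring
      have e2 : ((k : ℤ) + 1 + 1 - 2) = k := by ring
      rw [hf ((k : ℤ) + 1 + 1), hg ((k : ℤ) + 1 + 1), e1, e2, ih.1, ih.2]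
    | pred k ih =>
      have e0 : (-(k : ℤ) - 1 + 1) = -k := by ring
      rw [e0]
      refine ⟨?_, ih.1⟩
      have e1 : (-(k : ℤ) + 1 - 1) = -k := by ring
      have e2 : (-(k : ℤ) + 1 - 2) = -k - 1 := by ring
      have hf' := hf (-(k : ℤ) + 1); rw [e1, e2] at hf'
      have hg' := hg (-(k : ℤ) + 1); rw [e1, e2] at hg'
      have hcc : c₂ * f (-(k : ℤ) - 1) = c₂ * g (-(k : ℤ) - 1) := by
        linear_combination ih.2 - hf' + hg' - c₁ * ih.1
      exact mul_left_cancel₀ hc₂ hcc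
  exact fun n => (key n).1

/-- Generalized Catalan identity (Proposition 1):
`W_{s+i}·Y_{s+j} − W_s·Y_{s+i+j} = (−c₂)^s · (W₁·Y_j − W₀·Y_{j+1}) · U_i`. -/
theorem generalized_catalan (c₁ c₂ : ℝ) (hc₂ : c₂ ≠ 0)
    (a₀ a₁ b₀ b₁ : ℝ) (W Y U : ℤ → ℝ)
    (hW0 : W 0 = a₀) (hW1 : W 1 = a₁)
    (hW : ∀ n : ℤ, W n = c₁ * W (n - 1) + c₂ * W (n - 2))
    (hY0 : Y 0 = b₀) (hY1 : Y 1 = b₁)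
    (hY : ∀ n : ℤ, Y n = c₁ * Y (n - 1) + c₂ * Y (n - 2))
    (hU0 : U 0 = 0) (hU1 : U 1 = 1)
    (hU : ∀ n : ℤ, U n = c₁ * U (n - 1) + c₂ * U (n - 2)) :
    ∀ s i j : ℤ, W (s + i) * Y (s + j) - W s * Y (s + i + j) =
      (-c₂) ^ s * (W 1 * Y j - W 0 * Y (j + 1)) * U i := by
  intro s i j
  -- Step 1: the case i = 1, via the geometric lemma.
  have hA : ∀ t : ℤ, W (t + 1) * Y (t + j) - W t * Y (t + j + 1) =
      (-c₂) ^ t * (W 1 * Y j - W 0 * Y (j + 1)) := by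
    have := geom_aux (-c₂) (neg_ne_zero.mpr hc₂)
      (fun t => W (t + 1) * Y (t + j) - W t * Y (t + j + 1)) ?_
    · intro t
      have h := this t
      beta_reduce at h
      rw [h]
      norm_num
    · intro t
      have hw := hW (t + 1 + 1)
      have hy := hY (t + j + 1 + 1)
      have e1 : (t + 1 + 1 - 1 : ℤ) = t + 1 := by ring
      have e2 : (t + 1 + 1 - 2 : ℤ) = t := by ring
      have e3 : (t + j + 1 + 1 - 1 : ℤ) = t + j + 1 := by ring
      have e4 : (t + j + 1 + 1 - 2 : ℤ) = t + j := by ring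
      rw [e1, e2] at hw; rw [e3, e4] at hy
      have e5 : (t + 1 + j : ℤ) = t + j + 1 := by ring
      have e6 : (t + 1 + j + 1 : ℤ) = t + j + 1 + 1 := by ring
      beta_reduce
      rw [e5, hw, hy]
      ring
  -- Step 2: both sides satisfy the recurrence in i, agree at 0 and 1.
  have key := uniq_aux c₁ c₂ hc₂
    (fun i => W (s + i) * Y (s + j) - W s * Y (s + i + j))
    (fun i => (-c₂) ^ s * (W 1 * Y j - W 0 * Y (j + 1)) * U i)
    ?_ ?_ ?_ ?_
  · exact key i
  · intro n
    have hw := hW (s + n)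
    have hy := hY (s + n + j)
    have e1 : (s + n - 1 : ℤ) = s + (n - 1) := by ring
    have e2 : (s + n - 2 : ℤ) = s + (n - 2) := by ring
    have e3 : (s + n + j - 1 : ℤ) = s + (n - 1) + j := by ring
    have e4 : (s + n + j - 2 : ℤ) = s + (n - 2) + j := by ring
    rw [e1, e2] at hw; rw [e3, e4] at hy
    beta_reduce
    rw [hw, hy]
    ring
  · intro n
    beta_reduce
    rw [hU n]
    ring
  · simp [hU0]
  · have h := hA s
    have e2 : (s + 1 + j : ℤ) = s + j + 1 := by ring
    beta_reduce
    rw [hU1, e2, h]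
    ring
end

section
/- Let W = W(a₀,a₁) and Y = W(b₀,b₁) be two sequences satisfying the same second-order recurrence. Then for all integers s and j, one has W_{s+1}·Y_{s+j} − W_s·Y_{s+j+1} = (−c₂)^s · (W₁·Y_j − W₀·Y_{j+1}). -/
/-- Identity (5): `W_{s+1}·Y_{s+j} − W_s·Y_{s+j+1} = (−c₂)^s · (W₁·Y_j − W₀·Y_{j+1})`. -/
theorem catalan_base_case (c₁ c₂ : ℝ) (hc₂ : c₂ ≠ 0)
    (a₀ a₁ b₀ b₁ : ℝ) (W Y : ℤ → ℝ)
    (hW0 : W 0 = a₀) (hW1 : W 1 = a₁)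
    (hW : ∀ n : ℤ, W n = c₁ * W (n - 1) + c₂ * W (n - 2))
    (hY0 : Y 0 = b₀) (hY1 : Y 1 = b₁)
    (hY : ∀ n : ℤ, Y n = c₁ * Y (n - 1) + c₂ * Y (n - 2)) :
    ∀ s j : ℤ, W (s + 1) * Y (s + j) - W s * Y (s + j + 1) =
      (-c₂) ^ s * (W 1 * Y j - W 0 * Y (j + 1)) := by
  intro s j
  have hnc : (-c₂) ≠ 0 := neg_ne_zero.mpr hc₂
  set f : ℤ → ℝ := fun s => W (s + 1) * Y (s + j) - W s * Y (s + j + 1) with hf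
  have key : ∀ t : ℤ, f (t + 1) = -c₂ * f t := by
    intro t
    have e1 : W (t + 1 + 1) = c₁ * W (t + 1) + c₂ * W t := by
      have h := hW (t + 1 + 1)
      rw [show t + 1 + 1 - 1 = t + 1 by ring, show t + 1 + 1 - 2 = t by ring] at h
      exact h
    have e2 : Y (t + j + 1 + 1) = c₁ * Y (t + j + 1) + c₂ * Y (t + j) := by
      have h := hY (t + j + 1 + 1)
      rw [show t + j + 1 + 1 - 1 = t + j + 1 by ring,
        show t + j + 1 + 1 - 2 = t + j by ring] at h
      exact h
    simp only [hf]
    rw [show t + 1 + j = t + j + 1 by ring, e1, e2]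
    ring
  have h0 : f 0 = W 1 * Y j - W 0 * Y (j + 1) := by simp [hf]
  show f s = (-c₂) ^ s * (W 1 * Y j - W 0 * Y (j + 1))
  rw [← h0]
  induction s using Int.induction_on with
  | zero => simp
  | succ k ih => rw [key k, ih, zpow_add_one₀ hnc]; ring
  | pred k ih =>
    have h := key (-(k : ℤ) - 1)
    rw [show (-(k : ℤ) - 1 + 1) = -k by ring] at h
    have hstep : f (-(k : ℤ) - 1) = f (-(k : ℤ)) / (-c₂) := by
      field_simp at h ⊢; linarith [h]
    rw [hstep, ih, zpow_sub_one₀ hnc]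
    field_simp
end

section
/- Let W = W(a,b) be a sequence satisfying the second-order recurrence. Then for all integers s, i, and j, one has U_{s+i}·W_{s+j} − U_s·W_{s+i+j} = (−c₂)^s · U_i · W_j. -/
/-- Addition formula: `W (m+n) = U m * W (n+1) + c₂ * U (m-1) * W n`. -/
lemma add_formula (c₁ c₂ : ℝ) (hc₂ : c₂ ≠ 0) (W U : ℤ → ℝ)
    (hW : ∀ n : ℤ, W n = c₁ * W (n - 1) + c₂ * W (n - 2))
    (hU0 : U 0 = 0) (hU1 : U 1 = 1)
    (hU : ∀ n : ℤ, U n = c₁ * U (n - 1) + c₂ * U (n - 2)) :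
    ∀ m n : ℤ, W (m + n) = U m * W (n + 1) + c₂ * U (m - 1) * W n := by
  have hUm1 : c₂ * U (-1) = 1 := by
    have h := hU 1
    norm_num [hU0, hU1] at h
    linarith
  suffices H : ∀ m : ℤ, (∀ n : ℤ, W (m + n) = U m * W (n + 1) + c₂ * U (m - 1) * W n) ∧
      (∀ n : ℤ, W (m + 1 + n) = U (m + 1) * W (n + 1) + c₂ * U (m + 1 - 1) * W n) by
    exact fun m n => (H m).1 n
  intro m
  induction m using Int.induction_on with
  | zero =>
    constructor
    · intro n
      rw [zero_add, hU0]
      norm_num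
      linear_combination (-(W n)) * hUm1
    · intro n
      norm_num [hU0, hU1]
      rw [add_comm]
  | succ k ih =>
    refine ⟨ih.2, fun n => ?_⟩
    have e := hW ((k : ℤ) + 1 + 1 + n)
    have e1 : (k : ℤ) + 1 + 1 + n - 1 = (k : ℤ) + 1 + n := by ring
    have e2 : (k : ℤ) + 1 + 1 + n - 2 = (k : ℤ) + n := by ring
    rw [e1, e2] at e
    have hu := hU ((k : ℤ) + 1 + 1)
    have f1 : (k : ℤ) + 1 + 1 - 1 = (k : ℤ) + 1 := by ring
    have f2 : (k : ℤ) + 1 + 1 - 2 = (k : ℤ) := by ring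
    rw [f1, f2] at hu
    have hu' := hU ((k : ℤ) + 1)
    have g1 : (k : ℤ) + 1 - 1 = (k : ℤ) := by ring
    have g2 : (k : ℤ) + 1 - 2 = (k : ℤ) - 1 := by ring
    rw [g1, g2] at hu'
    have hk1 := ih.2 n
    have hk := ih.1 n
    rw [f1]
    rw [g1] at hk1
    linear_combination e + c₁ * hk1 + c₂ * hk - W (n + 1) * hu - c₂ * (W n) * hu'
  | pred k ih =>
    constructor
    · intro n
      have e := hW (-(k : ℤ) + 1 + n)
      have e1 : -(k : ℤ) + 1 + n - 1 = -(k : ℤ) + n := by ring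
      have e2 : -(k : ℤ) + 1 + n - 2 = -(k : ℤ) - 1 + n := by ring
      rw [e1, e2] at e
      have hu := hU (-(k : ℤ) + 1)
      have f1 : -(k : ℤ) + 1 - 1 = -(k : ℤ) := by ring
      have f2 : -(k : ℤ) + 1 - 2 = -(k : ℤ) - 1 := by ring
      rw [f1, f2] at hu
      have hu' := hU (-(k : ℤ))
      have g1 : -(k : ℤ) - 1 - 1 = -(k : ℤ) - 2 := by ring
      have hk1 := ih.2 n
      rw [f1] at hk1
      have hk := ih.1 n
      rw [g1]
      apply mul_left_cancel₀ hc₂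
      linear_combination -e + hk1 - c₁ * hk + W (n + 1) * hu + c₂ * (W n) * hu'
    · intro n
      have h := ih.1 n
      have q2 : -(k : ℤ) - 1 + 1 + n = -(k : ℤ) + n := by ring
      have q1 : -(k : ℤ) - 1 + 1 = -(k : ℤ) := by ring
      rw [q2, q1]
      exact h

/-- Cassini identity for `U`. -/
lemma cassini (c₁ c₂ : ℝ) (hc₂ : c₂ ≠ 0) (U : ℤ → ℝ)
    (hU0 : U 0 = 0) (hU1 : U 1 = 1)
    (hU : ∀ n : ℤ, U n = c₁ * U (n - 1) + c₂ * U (n - 2)) :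
    ∀ s : ℤ, U (s + 1) * U (s + 1) - U (s + 2) * U s = (-c₂) ^ s := by
  have hmc : (-c₂) ≠ 0 := neg_ne_zero.mpr hc₂
  have step : ∀ s : ℤ, U (s + 2) * U (s + 2) - U (s + 3) * U (s + 1) =
      -c₂ * (U (s + 1) * U (s + 1) - U (s + 2) * U s) := by
    intro s
    have h3 := hU (s + 3)
    have a1 : s + 3 - 1 = s + 2 := by ring
    have a2 : s + 3 - 2 = s + 1 := by ring
    rw [a1, a2] at h3
    have h2 := hU (s + 2)
    have b1 : s + 2 - 1 = s + 1 := by ring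
    have b2 : s + 2 - 2 = s := by ring
    rw [b1, b2] at h2
    linear_combination (-U (s + 1)) * h3 + U (s + 2) * h2
  intro s
  induction s using Int.induction_on with
  | zero =>
    have h2 := hU 2
    norm_num [hU0, hU1] at h2 ⊢
  | succ k ih =>
    have hs := step k
    have c1 : (k : ℤ) + 1 + 1 = (k : ℤ) + 2 := by ring
    have c2 : (k : ℤ) + 1 + 2 = (k : ℤ) + 3 := by ring
    rw [c1, c2, hs, ih, zpow_add_one₀ hmc]
    ring
  | pred k ih =>
    have hs := step (-(k : ℤ) - 1)
    have c1 : -(k : ℤ) - 1 + 2 = -(k : ℤ) + 1 := by ring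
    have c2 : -(k : ℤ) - 1 + 3 = -(k : ℤ) + 2 := by ring
    have c3 : -(k : ℤ) - 1 + 1 = -(k : ℤ) := by ring
    rw [c1, c2, c3] at hs
    rw [ih] at hs
    -- hs : (-c₂)^(-k) = -c₂ * (U (-k) * U (-k) - U (-k+1) * U (-k-1))
    have goal1 : -(k : ℤ) - 1 + 1 = -(k : ℤ) := by ring
    have goal2 : -(k : ℤ) - 1 + 2 = -(k : ℤ) + 1 := by ring
    rw [goal1, goal2]
    apply mul_left_cancel₀ hmc
    have pw : (-c₂) * (-c₂) ^ (-(k : ℤ) - 1) = (-c₂) ^ (-(k : ℤ)) := by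
      rw [mul_comm, ← zpow_add_one₀ hmc]
      norm_num
    linear_combination -hs - pw

/-- Identity (7): `U_{s+i}·W_{s+j} − U_s·W_{s+i+j} = (−c₂)^s · U_i · W_j`. -/
theorem catalan_UW (c₁ c₂ : ℝ) (hc₂ : c₂ ≠ 0)
    (a b : ℝ) (W U : ℤ → ℝ)
    (hW0 : W 0 = a) (hW1 : W 1 = b)
    (hW : ∀ n : ℤ, W n = c₁ * W (n - 1) + c₂ * W (n - 2))
    (hU0 : U 0 = 0) (hU1 : U 1 = 1)
    (hU : ∀ n : ℤ, U n = c₁ * U (n - 1) + c₂ * U (n - 2)) :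
    ∀ s i j : ℤ, U (s + i) * W (s + j) - U s * W (s + i + j) =
      (-c₂) ^ s * U i * W j := by
  have hmc : (-c₂) ≠ 0 := neg_ne_zero.mpr hc₂
  have add := add_formula c₁ c₂ hc₂ W U hW hU0 hU1 hU
  have addU := add_formula c₁ c₂ hc₂ U U hU hU0 hU1 hU
  have cas := cassini c₁ c₂ hc₂ U hU0 hU1 hU
  intro s i j
  have h1 := addU s i
  have h2 := add s j
  have h3 := add s (i + j)
  have e3 : s + (i + j) = s + i + j := by ring
  rw [e3] at h3
  have h4 := add (i + 1) j
  have e4a : i + 1 + j = i + j + 1 := by ring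
  have e4b : i + 1 - 1 = i := by ring
  rw [e4a, e4b] at h4
  have h5 := add i j
  have h6 := hU (i + 1)
  have e6a : i + 1 - 1 = i := by ring
  have e6b : i + 1 - 2 = i - 1 := by ring
  rw [e6a, e6b] at h6
  have h7 := hU s
  have h8 := cas (s - 2)
  have e8a : s - 2 + 1 = s - 1 := by ring
  have e8b : s - 2 + 2 = s := by ring
  rw [e8a, e8b] at h8
  have h9 : (-c₂) ^ s = (-c₂) ^ (s - 2) * (c₂ * c₂) := by
    have : (-c₂) ^ s = (-c₂) ^ (s - 2 + 2) := by norm_num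
    rw [this, zpow_add₀ hmc, zpow_two]
    ring
  rw [h1, h2, h3, h4, h5]
  linear_combination (c₂ * U s * U (s - 1) * W j) * h6 +
    (-(c₂ * U i * W j * U s)) * h7 + (c₂ * c₂ * U i * W j) * h8 +
    (-(U i * W j)) * h9
end

section
/- Let W = W(a,b) be a sequence satisfying the second-order recurrence, with discriminant Δ = b² − c₁·a·b − c₂·a². Then for all integers s, i, and j, one has W_{s+i}·W_{s+j} − W_s·W_{s+i+j} = (−c₂)^s · Δ · U_i · U_j. -/
/-- A `ℤ`-indexed sequence satisfying the recurrence that vanishes at `0` and `1`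
vanishes everywhere. -/
lemma rec_zero (c₁ c₂ : ℝ) (hc₂ : c₂ ≠ 0) (f : ℤ → ℝ)
    (hf : ∀ n : ℤ, f n = c₁ * f (n - 1) + c₂ * f (n - 2))
    (h0 : f 0 = 0) (h1 : f 1 = 0) : ∀ n : ℤ, f n = 0 := by
  have pos : ∀ k : ℕ, f k = 0 ∧ f (k + 1) = 0 := by
    intro k
    induction k with
    | zero => simpa using ⟨h0, h1⟩
    | succ k ih =>
      refine ⟨by exact_mod_cast ih.2, ?_⟩
      have h := hf ((k : ℤ) + 2)
      have e1 : ((k : ℤ) + 2) - 1 = (k : ℤ) + 1 := by ring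
      have e2 : ((k : ℤ) + 2) - 2 = (k : ℤ) := by ring
      rw [e1, e2, ih.1, ih.2] at h
      show f (((k + 1 : ℕ) : ℤ) + 1) = 0
      rw [show (((k + 1 : ℕ) : ℤ) + 1) = (k : ℤ) + 2 by push_cast; ring, h]
      ring
  have neg : ∀ k : ℕ, f (-(k : ℤ)) = 0 ∧ f (-(k : ℤ) + 1) = 0 := by
    intro k
    induction k with
    | zero => simpa using ⟨h0, h1⟩
    | succ k ih =>
      have h := hf (-(k : ℤ) + 1)
      have e1 : (-(k : ℤ) + 1) - 1 = -(k : ℤ) := by ring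
      have e2 : (-(k : ℤ) + 1) - 2 = -((k : ℤ) + 1) := by ring
      rw [e1, e2, ih.1, ih.2] at h
      have hk : f (-((k : ℤ) + 1)) = 0 := by
        have h' : c₂ * f (-((k : ℤ) + 1)) = 0 := by linarith
        exact (mul_eq_zero.mp h').resolve_left hc₂
      constructor
      · show f (-((k + 1 : ℕ) : ℤ)) = 0
        rw [show (-((k + 1 : ℕ) : ℤ)) = -((k : ℤ) + 1) by push_cast; ring]
        exact hk
      · show f (-((k + 1 : ℕ) : ℤ) + 1) = 0
        rw [show (-((k + 1 : ℕ) : ℤ) + 1) = -(k : ℤ) by push_cast; ring]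
        exact ih.1
  intro n
  rcases le_or_gt 0 n with h | h
  · obtain ⟨k, rfl⟩ := Int.eq_ofNat_of_zero_le h
    exact (pos k).1
  · obtain ⟨k, hk⟩ : ∃ k : ℕ, n = -(k : ℤ) := ⟨n.natAbs, by omega⟩
    rw [hk]; exact (neg k).1

/-- Identity (8): `W_{s+i}·W_{s+j} − W_s·W_{s+i+j} = (−c₂)^s · Δ · U_i · U_j`,
where `Δ = b² − c₁·a·b − c₂·a²`. -/
theorem catalan_WW (c₁ c₂ : ℝ) (hc₂ : c₂ ≠ 0)
    (a b : ℝ) (W U : ℤ → ℝ)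
    (hW0 : W 0 = a) (hW1 : W 1 = b)
    (hW : ∀ n : ℤ, W n = c₁ * W (n - 1) + c₂ * W (n - 2))
    (hU0 : U 0 = 0) (hU1 : U 1 = 1)
    (hU : ∀ n : ℤ, U n = c₁ * U (n - 1) + c₂ * U (n - 2)) :
    ∀ s i j : ℤ, W (s + i) * W (s + j) - W s * W (s + i + j) =
      (-c₂) ^ s * (b ^ 2 - c₁ * a * b - c₂ * a ^ 2) * U i * U j := by
  set D : ℤ → ℝ := fun s => W (s + 1) ^ 2 - c₁ * W s * W (s + 1) - c₂ * W s ^ 2 with hD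
  -- Step 1: D s = (-c₂)^s * D 0
  have hDstep : ∀ s : ℤ, D (s + 1) = -c₂ * D s := by
    intro s
    have h := hW (s + 2)
    rw [show (s + 2 : ℤ) - 1 = s + 1 by ring, show (s + 2 : ℤ) - 2 = s by ring] at h
    simp only [hD]
    rw [show (s + 1 + 1 : ℤ) = s + 2 by ring, h]
    ring
  have hDs : ∀ s : ℤ, D s = (-c₂) ^ s * D 0 := by
    intro s
    induction s using Int.induction_on with
    | zero => simp
    | succ k ih =>
      rw [hDstep k, ih, zpow_add₀ (neg_ne_zero.mpr hc₂), zpow_one]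
      ring
    | pred k ih =>
      have := hDstep (-(k : ℤ) - 1)
      rw [show (-(k : ℤ) - 1 + 1) = -(k : ℤ) by ring, ih] at this
      have hne : (-c₂ : ℝ) ≠ 0 := neg_ne_zero.mpr hc₂
      have : D (-(k : ℤ) - 1) = (-c₂)⁻¹ * ((-c₂) ^ (-(k : ℤ)) * D 0) := by
        field_simp at this ⊢; linarith [this]
      rw [this, show (-(k : ℤ) - 1) = (-((k : ℤ) + 1)) by ring,
        show (-((k : ℤ) + 1)) = -(k : ℤ) + (-1) by ring,
        zpow_add₀ hne, zpow_neg_one]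
      ring
  -- Step 2: for all s j, W(s+1)*W(s+j) - W s * W(s+j+1) = D s * U j
  have step2 : ∀ s j : ℤ, W (s + 1) * W (s + j) - W s * W (s + j + 1) = D s * U j := by
    intro s
    have key := rec_zero c₁ c₂ hc₂
      (fun j => W (s + 1) * W (s + j) - W s * W (s + j + 1) - D s * U j) ?_ ?_ ?_
    · intro j
      have := key j
      linarith [this]
    · intro n
      have h1 := hW (s + n)
      have h2 := hW (s + n + 1)
      have h3 := hU n
      rw [show (s + n : ℤ) - 1 = s + (n - 1) by ring,
        show (s + n : ℤ) - 2 = s + (n - 2) by ring] at h1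
      rw [show (s + n + 1 : ℤ) - 1 = s + (n - 1) + 1 by ring,
        show (s + n + 1 : ℤ) - 2 = s + (n - 2) + 1 by ring] at h2
      rw [h1, h2, h3]
      ring
    · rw [show (s + 0 : ℤ) = s by ring, hU0]
      ring
    · have h2 := hW (s + 2)
      rw [show (s + 2 : ℤ) - 1 = s + 1 by ring, show (s + 2 : ℤ) - 2 = s by ring] at h2
      rw [hU1, show (s + 1 + 1 : ℤ) = s + 2 by ring, h2]
      simp only [hD]
      ring
  -- Step 3
  intro s i j
  have key := rec_zero c₁ c₂ hc₂
    (fun i => W (s + i) * W (s + j) - W s * W (s + i + j) - D s * U j * U i) ?_ ?_ ?_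
  · have := key i
    have hD0 : D 0 = b ^ 2 - c₁ * a * b - c₂ * a ^ 2 := by
      simp only [hD]
      rw [show (0 + 1 : ℤ) = 1 by ring, hW0, hW1]
    have := this
    rw [hDs s, hD0] at this
    linarith [this]
  · intro n
    have h1 := hW (s + n)
    have h2 := hW (s + n + j)
    have h3 := hU n
    rw [show (s + n : ℤ) - 1 = s + (n - 1) by ring,
      show (s + n : ℤ) - 2 = s + (n - 2) by ring] at h1
    rw [show (s + n + j : ℤ) - 1 = s + (n - 1) + j by ring,
      show (s + n + j : ℤ) - 2 = s + (n - 2) + j by ring] at h2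
    rw [h1, h2, h3]
    ring
  · rw [show (s + 0 : ℤ) = s by ring, hU0]
    ring
  · have := step2 s j
    rw [hU1, show (s + 1 + j : ℤ) = s + j + 1 by ring]
    linarith [this]
end

section
/- Let W = W(a,b) be a sequence satisfying the second-order recurrence, with discriminant Δ = b² − c₁·a·b − c₂·a². Then for all integers k, n, r, s, and t, one has W_{−kr} · W_{s+k(n+t)} = W_{k(t−r)} · W_{s+kn} − (−c₂)^{−kr} · Δ · U_{kt} · U_{s+k(n+r)}. -/
private lemma int_two_step (P : ℤ → Prop) (h0 : P 0) (h1 : P 1)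
    (hf : ∀ n : ℤ, P n → P (n + 1) → P (n + 2))
    (hb : ∀ n : ℤ, P (n + 1) → P (n + 2) → P n) : ∀ n : ℤ, P n := by
  have key : ∀ n : ℤ, P n ∧ P (n + 1) := by
    intro n
    induction n using Int.induction_on with
    | zero => exact ⟨h0, h1⟩
    | succ i ih =>
        refine ⟨ih.2, ?_⟩
        rw [show (i : ℤ) + 1 + 1 = (i : ℤ) + 2 by ring]
        exact hf i ih.1 ih.2
    | pred i ih =>
        have e1 : P (-(i : ℤ) - 1 + 1) := by
          rw [show -(i : ℤ) - 1 + 1 = -(i : ℤ) by ring]; exact ih.1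
        have e2 : P (-(i : ℤ) - 1 + 2) := by
          rw [show -(i : ℤ) - 1 + 2 = -(i : ℤ) + 1 by ring]; exact ih.2
        exact ⟨hb _ e1 e2, e1⟩
  exact fun n => (key n).1

private lemma rep_lemma (c₁ c₂ : ℝ) (hc₂ : c₂ ≠ 0) (U : ℤ → ℝ)
    (hU0 : U 0 = 0) (hU1 : U 1 = 1)
    (hU : ∀ n : ℤ, U n = c₁ * U (n - 1) + c₂ * U (n - 2))
    (X : ℤ → ℝ) (hX : ∀ n : ℤ, X n = c₁ * X (n - 1) + c₂ * X (n - 2)) :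
    ∀ n : ℤ, X n = X 1 * U n + X 0 * (U (n + 1) - c₁ * U n) := by
  have hU' : ∀ n : ℤ, U (n + 2) = c₁ * U (n + 1) + c₂ * U n := by
    intro n
    have := hU (n + 2)
    rwa [show n + 2 - 1 = n + 1 by ring, show n + 2 - 2 = n by ring] at this
  have hX' : ∀ n : ℤ, X (n + 2) = c₁ * X (n + 1) + c₂ * X n := by
    intro n
    have := hX (n + 2)
    rwa [show n + 2 - 1 = n + 1 by ring, show n + 2 - 2 = n by ring] at this
  apply int_two_step
  · norm_num [hU0, hU1]
  · have h2 : U (0 + 2) = c₁ * U (0 + 1) + c₂ * U 0 := hU' 0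
    norm_num [hU0, hU1] at h2
    norm_num [hU1, h2]
  · intro n ih0 ih1
    rw [show n + 1 + 1 = n + 2 by ring] at ih1
    have hu2 := hU' n
    have hu3 := hU' (n + 1)
    rw [show n + 1 + 2 = n + 3 by ring, show n + 1 + 1 = n + 2 by ring] at hu3
    have hx := hX' n
    rw [show n + 2 + 1 = n + 3 by ring]
    linear_combination hx + c₁ * ih1 + c₂ * ih0 - X 1 * hu2 + X 0 * (c₁ * hu2 - hu3)
  · intro n ih1 ih2
    rw [show n + 1 + 1 = n + 2 by ring] at ih1
    rw [show n + 2 + 1 = n + 3 by ring] at ih2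
    have hu2 := hU' n
    have hu3 := hU' (n + 1)
    rw [show n + 1 + 2 = n + 3 by ring, show n + 1 + 1 = n + 2 by ring] at hu3
    have hx := hX' n
    apply mul_left_cancel₀ hc₂
    linear_combination -hx + ih2 - c₁ * ih1 + X 1 * hu2 + X 0 * (hu3 - c₁ * hu2)

private lemma docagne (c₁ c₂ : ℝ) (hc₂ : c₂ ≠ 0) (U : ℤ → ℝ)
    (hU0 : U 0 = 0) (hU1 : U 1 = 1)
    (hU : ∀ n : ℤ, U n = c₁ * U (n - 1) + c₂ * U (n - 2)) :
    ∀ d n : ℤ, U (n + d) * U (n + 1) - U (n + d + 1) * U n = (-c₂) ^ n * U d := by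
  have hnc : (-c₂) ≠ 0 := neg_ne_zero.mpr hc₂
  have hU' : ∀ n : ℤ, U (n + 2) = c₁ * U (n + 1) + c₂ * U n := by
    intro n
    have := hU (n + 2)
    rwa [show n + 2 - 1 = n + 1 by ring, show n + 2 - 2 = n by ring] at this
  intro d n
  induction n using Int.induction_on with
  | zero => simp [hU0, hU1]
  | succ i ih =>
      have h1 := hU' ((i : ℤ) + d)
      have h2 := hU' (i : ℤ)
      rw [zpow_add_one₀ hnc]
      linear_combination (norm := ring_nf)
        U ((i : ℤ) + d + 1) * h2 - U ((i : ℤ) + 1) * h1 - c₂ * ih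
  | pred i ih =>
      have h1 := hU' (-(i : ℤ) - 1 + d)
      have h2 := hU' (-(i : ℤ) - 1)
      have ihz : (-c₂) ^ (-(i : ℤ)) = (-c₂) ^ (-(i : ℤ) - 1) * (-c₂) := by
        rw [← zpow_add_one₀ hnc]; ring_nf
      rw [ihz] at ih
      apply mul_left_cancel₀ hnc
      linear_combination (norm := ring_nf)
        U (-(i : ℤ) - 1 + 1) * h1 - U (-(i : ℤ) - 1 + d + 1) * h2 + ih

private lemma addU (c₁ c₂ : ℝ) (hc₂ : c₂ ≠ 0) (U : ℤ → ℝ)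
    (hU0 : U 0 = 0) (hU1 : U 1 = 1)
    (hU : ∀ n : ℤ, U n = c₁ * U (n - 1) + c₂ * U (n - 2)) :
    ∀ p q : ℤ, U (p + q) = U (p + 1) * U q + U p * (U (q + 1) - c₁ * U q) := by
  intro p q
  have hX : ∀ n : ℤ, (fun n => U (p + n)) n
      = c₁ * (fun n => U (p + n)) (n - 1) + c₂ * (fun n => U (p + n)) (n - 2) := by
    intro n
    have := hU (p + n)
    rwa [show p + n - 1 = p + (n - 1) by ring, show p + n - 2 = p + (n - 2) by ring] at this
  have := rep_lemma c₁ c₂ hc₂ U hU0 hU1 hU (fun n => U (p + n)) hX q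
  simpa using this

private lemma keyC (c₁ c₂ : ℝ) (hc₂ : c₂ ≠ 0) (U : ℤ → ℝ)
    (hU0 : U 0 = 0) (hU1 : U 1 = 1)
    (hU : ∀ n : ℤ, U n = c₁ * U (n - 1) + c₂ * U (n - 2)) :
    ∀ x m y : ℤ, U x * U (y + m) - U (x + m) * U y
      = -((-c₂) ^ x * (U m * U (y - x))) := by
  intro x m y
  have h1 := addU c₁ c₂ hc₂ U hU0 hU1 hU m y
  have h2 := addU c₁ c₂ hc₂ U hU0 hU1 hU m x
  have h3 := docagne c₁ c₂ hc₂ U hU0 hU1 hU (y - x) x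
  linear_combination (norm := ring_nf) U x * h1 - U y * h2 - U m * h3

private lemma keyW (c₁ c₂ : ℝ) (hc₂ : c₂ ≠ 0) (U W : ℤ → ℝ)
    (hU0 : U 0 = 0) (hU1 : U 1 = 1)
    (hU : ∀ n : ℤ, U n = c₁ * U (n - 1) + c₂ * U (n - 2))
    (hW : ∀ n : ℤ, W n = c₁ * W (n - 1) + c₂ * W (n - 2)) :
    ∀ x m y : ℤ, W x * W (y + m) - W (x + m) * W y
      = -((-c₂) ^ x * ((W 1 ^ 2 - c₁ * W 0 * W 1 - c₂ * W 0 ^ 2)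
          * (U m * U (y - x)))) := by
  have hnc : (-c₂) ≠ 0 := neg_ne_zero.mpr hc₂
  have hU' : ∀ n : ℤ, U (n + 2) = c₁ * U (n + 1) + c₂ * U n := by
    intro n
    have := hU (n + 2)
    rwa [show n + 2 - 1 = n + 1 by ring, show n + 2 - 2 = n by ring] at this
  have hrep := rep_lemma c₁ c₂ hc₂ U hU0 hU1 hU W hW
  intro x m y
  have hC1 := keyC c₁ c₂ hc₂ U hU0 hU1 hU x m y
  have hC2 := keyC c₁ c₂ hc₂ U hU0 hU1 hU x (m + 1) y
  have hC3 := keyC c₁ c₂ hc₂ U hU0 hU1 hU (x + 1) (m - 1) (y + 1)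
  have hC4 := keyC c₁ c₂ hc₂ U hU0 hU1 hU (x + 1) m (y + 1)
  rw [zpow_add_one₀ hnc] at hC3 hC4
  have hm := hU' (m - 1)
  rw [hrep x, hrep (y + m), hrep (x + m), hrep y]
  linear_combination (norm := ring_nf)
    (W 1) ^ 2 * hC1 + W 0 * W 1 * (hC2 + hC3 - 2 * c₁ * hC1)
      + (W 0) ^ 2 * (hC4 - c₁ * hC2 - c₁ * hC3 + c₁ ^ 2 * hC1)
      + ((-c₂) ^ x * U (y - x) * (W 0 ^ 2 * c₁ - W 0 * W 1)) * hm

/-- Corollary 2 (cleared of denominators):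
`W_{−kr} · W_{s+k(n+t)} = W_{k(t−r)} · W_{s+kn} − (−c₂)^{−kr} · Δ · U_{kt} · U_{s+k(n+r)}`. -/
theorem corollary_shift (c₁ c₂ : ℝ) (hc₂ : c₂ ≠ 0)
    (a b : ℝ) (W U : ℤ → ℝ)
    (hW0 : W 0 = a) (hW1 : W 1 = b)
    (hW : ∀ n : ℤ, W n = c₁ * W (n - 1) + c₂ * W (n - 2))
    (hU0 : U 0 = 0) (hU1 : U 1 = 1)
    (hU : ∀ n : ℤ, U n = c₁ * U (n - 1) + c₂ * U (n - 2)) :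
    ∀ k n r s t : ℤ, W (-(k * r)) * W (s + k * (n + t)) =
      W (k * (t - r)) * W (s + k * n) -
        (-c₂) ^ (-(k * r)) * (b ^ 2 - c₁ * a * b - c₂ * a ^ 2) *
          U (k * t) * U (s + k * (n + r)) := by
  intro k n r s t
  have h := keyW c₁ c₂ hc₂ U W hU0 hU1 hU hW (-(k * r)) (k * t) (s + k * n)
  rw [hW0, hW1] at h
  linear_combination (norm := ring_nf) h
end

section
/- Let r be a natural number and let c₀, …, c_r and x₀, …, x_r be real numbers. Then the determinant of the (r+1)×(r+1) matrix whose (i,j) entry (0 ≤ i, j ≤ r) is (c_j·x_i + 1)^r equals ∏_{0 ≤ i < j ≤ r} (x_i − x_j) · ∏_{0 ≤ i < j ≤ r} (c_i − c_j) · ∏_{i=0}^{r} C(r,i), where C(r,i) denotes the binomial coefficient. -/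
open Finset

/-- Lemma 4: `det((c_j·x_i + 1)^r) = ∏_{i<j}(x_i − x_j) · ∏_{i<j}(c_i − c_j) · ∏ᵢ C(r,i)`. -/
theorem det_powers_linear (r : ℕ) (c x : Fin (r + 1) → ℝ) :
    Matrix.det (Matrix.of fun i j : Fin (r + 1) => (c j * x i + 1) ^ r) =
      (∏ i : Fin (r + 1), ∏ j ∈ Finset.Ioi i, (x i - x j)) *
      (∏ i : Fin (r + 1), ∏ j ∈ Finset.Ioi i, (c i - c j)) *
      ∏ i ∈ Finset.range (r + 1), (r.choose i : ℝ) := by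
  have hM : (Matrix.of fun i j : Fin (r + 1) => (c j * x i + 1) ^ r) =
      Matrix.vandermonde x *
        (Matrix.diagonal fun k : Fin (r + 1) => (r.choose (k : ℕ) : ℝ)) *
        (Matrix.vandermonde c).transpose := by
    ext i j
    simp only [Matrix.mul_apply, Matrix.diagonal_apply, Matrix.transpose_apply,
      Matrix.vandermonde, Matrix.of_apply, mul_ite, mul_zero, Finset.sum_ite_eq',
      Finset.mem_univ, if_true]
    rw [add_pow, ← Fin.sum_univ_eq_sum_range]
    congr 1
    ext k
    ring
  rw [hM, Matrix.det_mul, Matrix.det_mul, Matrix.det_transpose, Matrix.det_diagonal,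
    Matrix.det_vandermonde, Matrix.det_vandermonde, ← Fin.prod_univ_eq_prod_range]
  have hx : (∏ i : Fin (r + 1), ∏ j ∈ Finset.Ioi i, (x i - x j)) =
      (∏ i : Fin (r + 1), ∏ j ∈ Finset.Ioi i, (-1 : ℝ)) *
        ∏ i : Fin (r + 1), ∏ j ∈ Finset.Ioi i, (x j - x i) := by
    rw [← Finset.prod_mul_distrib]
    congr 1; ext i
    rw [← Finset.prod_mul_distrib]
    congr 1; ext j
    ring
  have hc : (∏ i : Fin (r + 1), ∏ j ∈ Finset.Ioi i, (c i - c j)) =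
      (∏ i : Fin (r + 1), ∏ j ∈ Finset.Ioi i, (-1 : ℝ)) *
        ∏ i : Fin (r + 1), ∏ j ∈ Finset.Ioi i, (c j - c i) := by
    rw [← Finset.prod_mul_distrib]
    congr 1; ext i
    rw [← Finset.prod_mul_distrib]
    congr 1; ext j
    ring
  have hs : (∏ i : Fin (r + 1), ∏ j ∈ Finset.Ioi i, (-1 : ℝ)) *
      (∏ i : Fin (r + 1), ∏ j ∈ Finset.Ioi i, (-1 : ℝ)) = 1 := by
    rw [← Finset.prod_mul_distrib]
    apply Finset.prod_eq_one
    intro i _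
    rw [← Finset.prod_mul_distrib]
    apply Finset.prod_eq_one
    intro j _
    ring
  rw [hx, hc]
  set A := ∏ i : Fin (r + 1), ∏ j ∈ Finset.Ioi i, (x j - x i) with hA
  set B := ∏ i : Fin (r + 1), ∏ j ∈ Finset.Ioi i, (c j - c i) with hB
  set s := ∏ i : Fin (r + 1), ∏ j ∈ Finset.Ioi i, (-1 : ℝ) with hS
  set P := ∏ i : Fin (r + 1), ((r.choose (i : ℕ)) : ℝ) with hP
  linear_combination (-(A * B * P)) * hs
end

section
/- Let r be a natural number and let A(0), …, A(r), B(0), …, B(r), X₀, …, X_r, Y₀, …, Y_r be real numbers. Then the determinant of the (r+1)×(r+1) matrix whose (i,j) entry (0 ≤ i, j ≤ r) is (A(j)·X_i + B(j)·Y_i)^r equals ∏_{0 ≤ i < j ≤ r} (X_i·Y_j − X_j·Y_i) · ∏_{0 ≤ i < j ≤ r} (A(i)·B(j) − A(j)·B(i)) · ∏_{i=0}^{r} C(r,i), where C(r,i) denotes the binomial coefficient. -/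
open Finset Matrix

lemma prod_pow_eq_pairs (r : ℕ) (Y : Fin (r + 1) → ℝ) :
    ∏ i : Fin (r + 1), Y i ^ r = ∏ i : Fin (r + 1), ∏ j ∈ Ioi i, (Y i * Y j) := by
  have h := Finset.prod_prod_Ioi_mul_eq_prod_prod_off_diag (fun _ y : Fin (r + 1) => Y y)
  simp only [Finset.prod_const] at h
  rw [h]
  refine Finset.prod_congr rfl fun i _ => ?_
  congr 1
  simp [Finset.card_compl]

lemma hvdm_aux (r : ℕ) (X Y : Fin (r + 1) → ℝ) (hY : ∀ i, Y i ≠ 0) :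
    Matrix.det (Matrix.of fun i k : Fin (r + 1) => X i ^ (k : ℕ) * Y i ^ (r - (k : ℕ))) =
      ∏ i : Fin (r + 1), ∏ j ∈ Ioi i, (X j * Y i - X i * Y j) := by
  have h1 : (Matrix.of fun i k : Fin (r + 1) => X i ^ (k : ℕ) * Y i ^ (r - (k : ℕ))) =
      Matrix.of (fun i k : Fin (r + 1) =>
        (fun i => Y i ^ r) i * Matrix.vandermonde (fun i => X i / Y i) i k) := by
    ext i k
    have hk : (k : ℕ) ≤ r := Nat.lt_succ_iff.mp k.isLt
    simp only [Matrix.of_apply, Matrix.vandermonde_apply, div_pow]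
    rw [pow_sub₀ _ (hY i) hk]
    field_simp
  rw [h1, Matrix.det_mul_column, Matrix.det_vandermonde]
  rw [prod_pow_eq_pairs]
  rw [← Finset.prod_mul_distrib]
  refine Finset.prod_congr rfl fun i _ => ?_
  rw [← Finset.prod_mul_distrib]
  refine Finset.prod_congr rfl fun j _ => ?_
  have hi := hY i
  have hj := hY j
  field_simp

lemma hvdm (r : ℕ) (X Y : Fin (r + 1) → ℝ) :
    Matrix.det (Matrix.of fun i k : Fin (r + 1) => X i ^ (k : ℕ) * Y i ^ (r - (k : ℕ))) =
      ∏ i : Fin (r + 1), ∏ j ∈ Ioi i, (X j * Y i - X i * Y j) := by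
  set f : ℝ → ℝ := fun t => Matrix.det (Matrix.of fun i k : Fin (r + 1) =>
      X i ^ (k : ℕ) * (Y i + t) ^ (r - (k : ℕ))) with hfdef
  set g : ℝ → ℝ := fun t => ∏ i : Fin (r + 1), ∏ j ∈ Ioi i,
      (X j * (Y i + t) - X i * (Y j + t)) with hgdef
  have hf : Continuous f := by
    apply Continuous.matrix_det
    refine continuous_matrix fun i k => ?_
    simp only [Matrix.of_apply]
    fun_prop
  have hg : Continuous g := by
    apply continuous_finset_prod
    intro i _
    apply continuous_finset_prod
    intro j _
    fun_prop
  have hs : Dense ((Set.range fun i => -Y i)ᶜ) :=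
    Set.Countable.dense_compl ℝ (Set.finite_range _).countable
  have heq : Set.EqOn f g ((Set.range fun i => -Y i)ᶜ) := by
    intro t ht
    apply hvdm_aux r X (fun i => Y i + t)
    intro i hi0
    exact ht ⟨i, by simp; linarith⟩
  have h := Continuous.ext_on hs hf hg heq
  have h0 := congrFun h 0
  simpa [hfdef, hgdef] using h0

/-- Corollary 5: `det((A(j)·X_i + B(j)·Y_i)^r)
  = ∏_{i<j}(X_i·Y_j − X_j·Y_i) · ∏_{i<j}(A(i)·B(j) − A(j)·B(i)) · ∏ᵢ C(r,i)`. -/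
theorem det_powers_bilinear (r : ℕ) (A B X Y : Fin (r + 1) → ℝ) :
    Matrix.det (Matrix.of fun i j : Fin (r + 1) => (A j * X i + B j * Y i) ^ r) =
      (∏ i : Fin (r + 1), ∏ j ∈ Finset.Ioi i, (X i * Y j - X j * Y i)) *
      (∏ i : Fin (r + 1), ∏ j ∈ Finset.Ioi i, (A i * B j - A j * B i)) *
      ∏ i ∈ Finset.range (r + 1), (r.choose i : ℝ) := by
  have hM : (Matrix.of fun i j : Fin (r + 1) => (A j * X i + B j * Y i) ^ r) =
      (Matrix.of fun i k : Fin (r + 1) =>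
        (fun k : Fin (r + 1) => (r.choose (k : ℕ) : ℝ)) k *
          (X i ^ (k : ℕ) * Y i ^ (r - (k : ℕ)))) *
      (Matrix.of fun j k : Fin (r + 1) => A j ^ (k : ℕ) * B j ^ (r - (k : ℕ)))ᵀ := by
    ext i j
    rw [Matrix.mul_apply]
    simp only [Matrix.of_apply, Matrix.transpose_apply]
    rw [add_pow]
    rw [← Fin.sum_univ_eq_sum_range
      (fun k => (A j * X i) ^ k * (B j * Y i) ^ (r - k) * (r.choose k : ℝ))]
    refine Finset.sum_congr rfl fun k _ => ?_
    rw [mul_pow, mul_pow]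
    ring
  rw [hM, Matrix.det_mul, Matrix.det_transpose]
  erw [Matrix.det_mul_row (fun k : Fin (r + 1) => (r.choose (k : ℕ) : ℝ))]
  rw [show (Matrix.det fun i k : Fin (r + 1) => X i ^ (k : ℕ) * Y i ^ (r - (k : ℕ))) =
      ∏ i : Fin (r + 1), ∏ j ∈ Ioi i, (X j * Y i - X i * Y j) from hvdm r X Y,
    hvdm r A B]
  rw [Fin.prod_univ_eq_prod_range (fun k => (r.choose k : ℝ))]
  have key : (∏ i : Fin (r + 1), ∏ j ∈ Ioi i, (X j * Y i - X i * Y j)) *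
      (∏ i : Fin (r + 1), ∏ j ∈ Ioi i, (A j * B i - A i * B j)) =
      (∏ i : Fin (r + 1), ∏ j ∈ Ioi i, (X i * Y j - X j * Y i)) *
      (∏ i : Fin (r + 1), ∏ j ∈ Ioi i, (A i * B j - A j * B i)) := by
    rw [← Finset.prod_mul_distrib, ← Finset.prod_mul_distrib]
    refine Finset.prod_congr rfl fun i _ => ?_
    rw [← Finset.prod_mul_distrib, ← Finset.prod_mul_distrib]
    refine Finset.prod_congr rfl fun j _ => ?_
    ring
  calc (∏ i ∈ Finset.range (r + 1), (r.choose i : ℝ)) *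
        (∏ i : Fin (r + 1), ∏ j ∈ Ioi i, (X j * Y i - X i * Y j)) *
        (∏ i : Fin (r + 1), ∏ j ∈ Ioi i, (A j * B i - A i * B j))
      = ((∏ i : Fin (r + 1), ∏ j ∈ Ioi i, (X j * Y i - X i * Y j)) *
        (∏ i : Fin (r + 1), ∏ j ∈ Ioi i, (A j * B i - A i * B j))) *
        ∏ i ∈ Finset.range (r + 1), (r.choose i : ℝ) := by ring
    _ = _ := by rw [key]
end

section
/- For integers r ≥ 0, s, k, and n, the determinant of the (r+1)×(r+1) matrix whose (i,j) entry (0 ≤ i, j ≤ r) is F_{s+k(n+i+j)}^r equals (−1)^{(s+kn+1)·C(r+1,2)} · (∏_{i=1}^{r} F_{ik}^{r+1−i})² · ∏_{i=0}^{r} C(r,i). -/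
open Finset



lemma prod_pairs_mul {R : Type*} [CommMonoid R] (r : ℕ) (y : Fin (r+1) → R) :
    ∏ i : Fin (r+1), ∏ j ∈ Ioi i, (y i * y j) = ∏ i : Fin (r+1), y i ^ r := by
  simp_rw [Finset.prod_mul_distrib]
  have h1 : ∏ i : Fin (r+1), ∏ _j ∈ Ioi i, y i = ∏ i : Fin (r+1), y i ^ (r - (i:ℕ)) := by
    refine Finset.prod_congr rfl fun i _ => ?_
    rw [Finset.prod_const, Fin.card_Ioi]
    norm_num
  have h2 : ∏ i : Fin (r+1), ∏ j ∈ Ioi i, y j = ∏ j : Fin (r+1), y j ^ (j:ℕ) := by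
    rw [Finset.prod_comm' (t' := univ) (s' := fun j => Iio j)
      (fun a b => by simp [mem_Ioi, mem_Iio, and_comm])]
    refine Finset.prod_congr rfl fun j _ => ?_
    rw [Finset.prod_const, Fin.card_Iio]
  rw [h1, h2, ← Finset.prod_mul_distrib]
  refine Finset.prod_congr rfl fun i _ => ?_
  rw [← pow_add]
  congr 1
  omega

lemma det_homog_field {K : Type*} [Field K] (r : ℕ) (x y : Fin (r+1) → K)
    (hy : ∀ i, y i ≠ 0) :
    Matrix.det (Matrix.of fun i l : Fin (r+1) => x i ^ (l:ℕ) * y i ^ (r - (l:ℕ)))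
      = ∏ i : Fin (r+1), ∏ j ∈ Ioi i, (x j * y i - x i * y j) := by
  have h1 : ∀ i l : Fin (r+1), x i ^ (l:ℕ) * y i ^ (r - (l:ℕ))
      = y i ^ r * (x i / y i) ^ (l:ℕ) := by
    intro i l
    have hl : (l : ℕ) ≤ r := Nat.lt_succ_iff.mp l.isLt
    have key : y i ^ (r - (l:ℕ)) * y i ^ (l:ℕ) = y i ^ r := by
      rw [← pow_add]; congr 1; omega
    rw [div_pow, mul_div_assoc', eq_div_iff (pow_ne_zero _ (hy i))]
    linear_combination x i ^ (l:ℕ) * key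
  have : Matrix.det (Matrix.of fun i l : Fin (r+1) => x i ^ (l:ℕ) * y i ^ (r - (l:ℕ)))
      = Matrix.det (Matrix.of fun i l : Fin (r+1) => y i ^ r *
          (Matrix.vandermonde fun i => x i / y i) i l) := by
    congr 1; ext i l; simp only [Matrix.of_apply, Matrix.vandermonde_apply, h1]
  rw [this, Matrix.det_mul_column, Matrix.det_vandermonde]
  rw [← prod_pairs_mul r y, ← Finset.prod_mul_distrib]
  refine Finset.prod_congr rfl fun i _ => ?_
  rw [← Finset.prod_mul_distrib]
  refine Finset.prod_congr rfl fun j _ => ?_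
  have hi := hy i
  have hj := hy j
  field_simp

lemma det_homog {R : Type*} [CommRing R] (r : ℕ) (x y : Fin (r+1) → R) :
    Matrix.det (Matrix.of fun i l : Fin (r+1) => x i ^ (l:ℕ) * y i ^ (r - (l:ℕ)))
      = ∏ i : Fin (r+1), ∏ j ∈ Ioi i, (x j * y i - x i * y j) := by
  let P := MvPolynomial (Fin (r+1) × Bool) ℤ
  let X : Fin (r+1) → P := fun i => MvPolynomial.X (i, true)
  let Y : Fin (r+1) → P := fun i => MvPolynomial.X (i, false)
  let K := FractionRing P
  have hinj : Function.Injective (algebraMap P K) := IsFractionRing.injective P K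
  have hpoly : Matrix.det (Matrix.of fun i l : Fin (r+1) => X i ^ (l:ℕ) * Y i ^ (r - (l:ℕ)))
      = ∏ i : Fin (r+1), ∏ j ∈ Ioi i, (X j * Y i - X i * Y j) := by
    apply hinj
    rw [RingHom.map_det, map_prod]
    have := det_homog_field r (fun i => algebraMap P K (X i)) (fun i => algebraMap P K (Y i))
      (fun i => by
        simp only [ne_eq, map_eq_zero_iff _ hinj]
        exact MvPolynomial.X_ne_zero _)
    rw [show ((algebraMap P K).mapMatrix
        (Matrix.of fun i l : Fin (r+1) => X i ^ (l:ℕ) * Y i ^ (r - (l:ℕ))))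
        = Matrix.of fun i l : Fin (r+1) =>
          (algebraMap P K (X i)) ^ (l:ℕ) * (algebraMap P K (Y i)) ^ (r - (l:ℕ)) by
      ext i l; simp [RingHom.mapMatrix_apply, Matrix.map_apply]]
    rw [this]
    refine Finset.prod_congr rfl fun i _ => ?_
    rw [map_prod]
    refine Finset.prod_congr rfl fun j _ => ?_
    rw [map_sub, map_mul, map_mul]
  -- specialize
  let f : P →+* R := (MvPolynomial.aeval (fun p : Fin (r+1) × Bool =>
    if p.2 then x p.1 else y p.1) : P →ₐ[ℤ] R).toRingHom
  have hfX : ∀ i, f (X i) = x i := fun i => by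
    show (MvPolynomial.aeval _) (MvPolynomial.X (i, true)) = _
    rw [MvPolynomial.aeval_X]
    simp
  have hfY : ∀ i, f (Y i) = y i := fun i => by
    show (MvPolynomial.aeval _) (MvPolynomial.X (i, false)) = _
    rw [MvPolynomial.aeval_X]
    simp
  have h2 := congrArg f hpoly
  rw [RingHom.map_det] at h2
  have hM : f.mapMatrix (Matrix.of fun i l : Fin (r+1) => X i ^ (l:ℕ) * Y i ^ (r - (l:ℕ)))
      = Matrix.of fun i l : Fin (r+1) => x i ^ (l:ℕ) * y i ^ (r - (l:ℕ)) := by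
    ext i l
    simp only [RingHom.mapMatrix_apply, Matrix.map_apply, Matrix.of_apply, map_mul, map_pow,
      hfX, hfY]
  have hR : f (∏ i : Fin (r+1), ∏ j ∈ Ioi i, (X j * Y i - X i * Y j))
      = ∏ i : Fin (r+1), ∏ j ∈ Ioi i, (x j * y i - x i * y j) := by
    rw [map_prod]
    refine Finset.prod_congr rfl fun i _ => ?_
    rw [map_prod]
    refine Finset.prod_congr rfl fun j _ => ?_
    rw [map_sub, map_mul, map_mul, hfX, hfY, hfX, hfY]
  rw [hM, hR] at h2
  exact h2

lemma u2' (t : ℤ) : (((-1:ℤˣ)^(t+2) : ℤˣ) : ℤ) = (((-1:ℤˣ)^t : ℤˣ) : ℤ) := by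
  rw [zpow_add]
  norm_num

lemma u1' (t : ℤ) : (((-1:ℤˣ)^(t+1) : ℤˣ) : ℤ) = -(((-1:ℤˣ)^t : ℤˣ) : ℤ) := by
  rw [zpow_add, zpow_one, mul_neg_one]; simp

lemma um1' (t : ℤ) : (((-1:ℤˣ)^(t-1) : ℤˣ) : ℤ) = -(((-1:ℤˣ)^t : ℤˣ) : ℤ) := by
  have := u1' (t-1)
  rw [sub_add_cancel] at this
  omega

lemma int_pair_induction (P : ℤ → Prop) (h0 : P 0) (h1 : P 1)
    (hup : ∀ t : ℤ, P t → P (t+1) → P (t+2))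
    (hdown : ∀ t : ℤ, P t → P (t+1) → P (t-1)) : ∀ t : ℤ, P t := by
  have key : ∀ t : ℤ, P t ∧ P (t+1) := by
    intro t
    induction t using Int.induction_on with
    | zero => exact ⟨h0, h1⟩
    | succ i ih => exact ⟨ih.2, by rw [show (i:ℤ)+1+1 = i+2 by ring]; exact hup i ih.1 ih.2⟩
    | pred i ih =>
        exact ⟨hdown (-i) ih.1 ih.2, by rw [show -(i:ℤ)-1+1 = -i by ring]; exact ih.1⟩
  exact fun t => (key t).1

section Fib
variable (F : ℤ → ℤ) (hF0 : F 0 = 0) (hF1 : F 1 = 1)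
  (hF : ∀ n : ℤ, F n = F (n - 1) + F (n - 2))

include hF in
lemma fib_rec2 : ∀ u : ℤ, F (u + 2) = F (u + 1) + F u := by
  intro u
  have h := hF (u + 2)
  rw [show u + 2 - 1 = u + 1 by ring, show u + 2 - 2 = u by ring] at h
  exact h

include hF0 hF1 hF in
lemma fib_neg_one : F (-1) = 1 := by
  have h := fib_rec2 F hF (-1)
  rw [show (-1:ℤ) + 2 = 1 by ring, show (-1:ℤ) + 1 = 0 by ring, hF0, hF1] at h
  omega

include hF0 hF1 hF in
lemma fib_two : F 2 = 1 := by
  have h := fib_rec2 F hF 0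
  rw [show (0:ℤ) + 2 = 2 by ring, show (0:ℤ) + 1 = 1 by ring, hF0, hF1] at h
  omega

include hF0 hF1 hF in
lemma fib_add (m : ℤ) : ∀ t : ℤ, F (m + t) = F m * F (t + 1) + F (m - 1) * F t := by
  apply int_pair_induction
  · rw [add_zero, zero_add, hF1, hF0]; ring
  · have h := fib_rec2 F hF (m - 1)
    rw [show m - 1 + 2 = m + 1 by ring, show m - 1 + 1 = m by ring] at h
    rw [h, show (1:ℤ) + 1 = 2 by ring, fib_two F hF0 hF1 hF, hF1]; ring
  · intro t h1 h2
    have ha := fib_rec2 F hF (m + t)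
    rw [show m + t + 2 = m + (t + 2) by ring, show m + t + 1 = m + (t + 1) by ring] at ha
    have hb := fib_rec2 F hF (t + 1)
    rw [show t + 1 + 2 = t + 2 + 1 by ring, show t + 1 + 1 = t + 2 by ring] at hb
    have hc := fib_rec2 F hF t
    rw [show t + 1 + 1 = t + 2 by ring] at h2
    rw [ha, h1, h2]
    linear_combination (-(F m)) * hb - F (m - 1) * hc
  · intro t h1 h2
    rw [show m + (t - 1) = m + t - 1 by ring, show t - 1 + 1 = t by ring]
    have ha : F (m + t - 1) = F (m + (t + 1)) - F (m + t) := by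
      have := fib_rec2 F hF (m + t - 1)
      rw [show m + t - 1 + 2 = m + (t + 1) by ring, show m + t - 1 + 1 = m + t by ring] at this
      omega
    have hd : F (t - 1) = F (t + 1) - F t := by
      have := fib_rec2 F hF (t - 1)
      rw [show t - 1 + 2 = t + 1 by ring, show t - 1 + 1 = t by ring] at this
      omega
    rw [show t + 1 + 1 = t + 2 by ring] at h2
    have hc := fib_rec2 F hF t
    rw [ha, h1, h2, hd]
    linear_combination F m * hc
  
include hF0 hF1 hF in
lemma fib_docagne (m : ℤ) : ∀ t : ℤ,
    F m * F (t - 1) - F t * F (m - 1) = ((-1 : ℤˣ) ^ t : ℤˣ) * F (m - t) := by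
  apply int_pair_induction
  · rw [show (0:ℤ) - 1 = -1 by ring, hF0, fib_neg_one F hF0 hF1 hF]
    simp
  · rw [show (1:ℤ) - 1 = 0 by ring, hF0, hF1]
    simp [zpow_one]
  · intro t h1 h2
    have hb : F (t + 2 - 1) = F (t + 1 - 1) + F (t - 1) := by
      have := fib_rec2 F hF (t - 1)
      rw [show t - 1 + 2 = t + 2 - 1 by ring, show t - 1 + 1 = t + 1 - 1 by ring] at this
      omega
    have hc := fib_rec2 F hF t
    have hd : F (m - (t + 2)) = F (m - t) - F (m - (t + 1)) := by
      have := fib_rec2 F hF (m - (t + 2))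
      rw [show m - (t + 2) + 2 = m - t by ring, show m - (t + 2) + 1 = m - (t + 1) by ring] at this
      omega
    rw [u2' t] at *
    rw [u1' t] at h2
    rw [show t + 1 - 1 = t by ring] at h2 hb
    rw [hb, hd]
    linear_combination h1 + h2 - F (m - 1) * hc
  · intro t h1 h2
    have hb : F (t - 1 - 1) = F t - F (t - 1) := by
      have := fib_rec2 F hF (t - 1 - 1)
      rw [show t - 1 - 1 + 2 = t by ring, show t - 1 - 1 + 1 = t - 1 by ring] at this
      omega
    have hd : F (m - (t - 1)) = F (m - (t + 1)) + F (m - t) := by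
      have := fib_rec2 F hF (m - (t + 1))
      rw [show m - (t + 1) + 2 = m - (t - 1) by ring, show m - (t + 1) + 1 = m - t by ring] at this
      omega
    have hc : F (t - 1) = F (t + 1) - F t := by
      have := fib_rec2 F hF (t - 1)
      rw [show t - 1 + 2 = t + 1 by ring, show t - 1 + 1 = t by ring] at this
      omega
    rw [show t + 1 - 1 = t by ring] at h2
    rw [um1' t]
    rw [u1' t] at h2
    rw [hc] at h1
    rw [hb, hc, hd]
    linear_combination h2 - h1
      
end Fib

lemma pair_prod {M : Type*} [CommMonoid M] (r : ℕ) (g : ℕ → M) :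
    ∏ i : Fin (r+1), ∏ j ∈ Ioi i, g ((j:ℕ) - (i:ℕ)) = ∏ d ∈ Icc 1 r, g d ^ (r + 1 - d) := by
  have step1 : ∀ i : Fin (r+1), ∏ j ∈ Ioi i, g ((j:ℕ) - (i:ℕ))
      = ∏ d ∈ range (r - (i:ℕ)), g (d + 1) := by
    intro i
    refine Finset.prod_bij' (fun j _ => (j:ℕ) - (i:ℕ) - 1)
      (fun d hd => ⟨(i:ℕ) + d + 1, by simp [mem_range] at hd; omega⟩) ?_ ?_ ?_ ?_ ?_
    · intro j hj
      simp only [mem_Ioi, Fin.lt_def] at hj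
      simp only [mem_range]
      omega
    · intro d hd
      simp only [mem_range] at hd
      simp only [mem_Ioi, Fin.lt_def]
      omega
    · intro j hj
      simp only [mem_Ioi, Fin.lt_def] at hj
      ext
      simp
      omega
    · intro d hd
      simp only [mem_range] at hd
      simp
      omega
    · intro j hj
      simp only [mem_Ioi, Fin.lt_def] at hj
      have : (j:ℕ) - (i:ℕ) - 1 + 1 = (j:ℕ) - (i:ℕ) := by omega
      rw [← this, Nat.add_sub_cancel]
  simp_rw [step1]
  rw [Finset.prod_comm' (t' := range r) (s' := fun d => univ.filter fun i : Fin (r+1) => d < r - (i:ℕ))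
    (fun i d => by simp only [mem_filter, mem_range, mem_univ, true_and, and_iff_left_iff_imp]; omega)]
  have hcard : ∀ d, (univ.filter fun i : Fin (r+1) => d < r - (i:ℕ)).card = r - d := by
    intro d
    have he : (univ.filter fun i : Fin (r+1) => d < r - (i:ℕ))
        = Finset.Iio (⟨r - d, by omega⟩ : Fin (r+1)) := by
      ext i
      simp only [mem_filter, mem_univ, true_and, Finset.mem_Iio, Fin.lt_def]
      omega
    rw [he, Fin.card_Iio]
  calc ∏ d ∈ range r, ∏ _i ∈ (univ.filter fun i : Fin (r+1) => d < r - (i:ℕ)), g (d+1)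
      = ∏ d ∈ range r, g (d+1) ^ (r - d) := by
        refine Finset.prod_congr rfl fun d _ => ?_
        rw [Finset.prod_const, hcard]
    _ = ∏ d ∈ Icc 1 r, g d ^ (r + 1 - d) := by
        rw [show Icc 1 r = Ico 1 (r+1) by rw [Finset.Ico_add_one_right_eq_Icc], Finset.prod_Ico_eq_prod_range]
        simp only [Nat.add_sub_cancel]
        refine Finset.prod_congr rfl fun d _ => ?_
        rw [add_comm 1 d]
        congr 1
        omega

lemma usq : ((-1:ℤˣ)^(2:ℤ)) = 1 := by
  rw [show (2:ℤ) = ((2:ℕ):ℤ) by norm_num, zpow_natCast]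
  simp

lemma hsum_lemma (r : ℕ) : ∑ i : Fin (r+1), (r - (i:ℕ)) = (r+1).choose 2 := by
  rw [Fin.sum_univ_eq_sum_range (fun i => r - i) (r+1)]
  have hrefl := Finset.sum_range_reflect (fun i => i) (r+1)
  simp only [Nat.add_sub_cancel] at hrefl
  have : ∑ i ∈ range (r+1), (r - i) = ∑ i ∈ range (r+1), i := by
    rw [← hrefl]
  rw [this, Finset.sum_range_id, Nat.choose_two_right]


/-- Formula (2): `det(F_{s+k(n+i+j)}^r) = (−1)^{(s+kn+1)C(r+1,2)} ·
(∏_{i=1}^{r} F_{ik}^{r+1−i})² · ∏ᵢ C(r,i)` for the Fibonacci numbers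
extended to all integers. -/
theorem det_powers_fib_general (F : ℤ → ℤ)
    (hF0 : F 0 = 0) (hF1 : F 1 = 1)
    (hF : ∀ n : ℤ, F n = F (n - 1) + F (n - 2))
    (r : ℕ) (s k n : ℤ) :
    Matrix.det (Matrix.of fun i j : Fin (r + 1) =>
        F (s + k * (n + (i : ℤ) + (j : ℤ))) ^ r) =
      ((-1 : ℤˣ) ^ ((s + k * n + 1) * ((r + 1).choose 2 : ℤ)) : ℤˣ) *
      (∏ i ∈ Finset.Icc 1 r, F ((i : ℤ) * k) ^ (r + 1 - i)) ^ 2 *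
      ∏ i ∈ Finset.range (r + 1), (r.choose i : ℤ) := by
  set a := s + k * n with ha
  set x : Fin (r+1) → ℤ := fun i => F (a + k * (i:ℤ)) with hx
  set y : Fin (r+1) → ℤ := fun i => F (a + k * (i:ℤ) - 1) with hy
  set u : Fin (r+1) → ℤ := fun j => F (k * (j:ℤ) + 1) with hu
  set v : Fin (r+1) → ℤ := fun j => F (k * (j:ℤ)) with hv
  set A : Matrix (Fin (r+1)) (Fin (r+1)) ℤ :=
    Matrix.of fun i l => (r.choose (l:ℕ) : ℤ) * (x i ^ (l:ℕ) * y i ^ (r - (l:ℕ))) with hA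
  set B : Matrix (Fin (r+1)) (Fin (r+1)) ℤ :=
    Matrix.of fun l j => u j ^ (l:ℕ) * v j ^ (r - (l:ℕ)) with hB
  have hM : (Matrix.of fun i j : Fin (r + 1) =>
      F (s + k * (n + (i : ℤ) + (j : ℤ))) ^ r) = A * B := by
    ext i j
    rw [Matrix.mul_apply]
    simp only [hA, hB, Matrix.of_apply]
    have harg : s + k * (n + (i:ℤ) + (j:ℤ)) = (a + k * (i:ℤ)) + k * (j:ℤ) := by
      rw [ha]; ring
    rw [harg, fib_add F hF0 hF1 hF (a + k * (i:ℤ)) (k * (j:ℤ)), add_pow]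
    rw [Fin.sum_univ_eq_sum_range
      (fun l => (r.choose l : ℤ) * (x i ^ l * y i ^ (r - l)) * (u j ^ l * v j ^ (r - l))) (r+1)]
    refine (Finset.sum_congr rfl fun l hl => ?_).symm
    simp only [hx, hy, hu, hv]
    rw [mul_pow, mul_pow]
    ring
  rw [hM, Matrix.det_mul]
  have hdetA : A.det = (∏ l : Fin (r+1), (r.choose (l:ℕ) : ℤ)) *
      ∏ i : Fin (r+1), ∏ j ∈ Ioi i, (x j * y i - x i * y j) := by
    have h : A = Matrix.of fun i l => (fun l : Fin (r+1) => (r.choose (l:ℕ) : ℤ)) l *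
        (Matrix.of fun i l : Fin (r+1) => x i ^ (l:ℕ) * y i ^ (r - (l:ℕ))) i l := rfl
    rw [h, Matrix.det_mul_row, det_homog]
  have hdetB : B.det = ∏ i : Fin (r+1), ∏ j ∈ Ioi i, (u j * v i - u i * v j) := by
    rw [← Matrix.det_transpose,
      show B.transpose = Matrix.of fun j l : Fin (r+1) => u j ^ (l:ℕ) * v j ^ (r - (l:ℕ)) from by
        ext j l; simp [hB, Matrix.transpose_apply], det_homog]
  rw [hdetA, hdetB]
  have hApair : ∀ i j : Fin (r+1), i ∈ (univ : Finset (Fin (r+1))) → j ∈ Ioi i →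
      x j * y i - x i * y j
        = (((-1:ℤˣ)^(a + k*(i:ℤ)) : ℤˣ) : ℤ) * F (k * ((j:ℤ) - (i:ℤ))) := by
    intro i j _ hj
    have h := fib_docagne F hF0 hF1 hF (a + k*(j:ℤ)) (a + k*(i:ℤ))
    rw [show a + k*(j:ℤ) - (a + k*(i:ℤ)) = k * ((j:ℤ) - (i:ℤ)) by ring] at h
    simp only [hx, hy]
    exact h
  have hBpair : ∀ i j : Fin (r+1), i ∈ (univ : Finset (Fin (r+1))) → j ∈ Ioi i →
      u j * v i - u i * v j
        = (((-1:ℤˣ)^(k*(i:ℤ) + 1) : ℤˣ) : ℤ) * F (k * ((j:ℤ) - (i:ℤ))) := by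
    intro i j _ hj
    have h := fib_docagne F hF0 hF1 hF (k*(j:ℤ) + 1) (k*(i:ℤ) + 1)
    rw [show k*(i:ℤ) + 1 - 1 = k*(i:ℤ) by ring, show k*(j:ℤ) + 1 - 1 = k*(j:ℤ) by ring,
      show k*(j:ℤ) + 1 - (k*(i:ℤ) + 1) = k * ((j:ℤ) - (i:ℤ)) by ring] at h
    simp only [hu, hv]
    exact h
  have e1 : (∏ i : Fin (r+1), ∏ j ∈ Ioi i, (x j * y i - x i * y j))
      = ∏ i : Fin (r+1), ∏ j ∈ Ioi i,
        ((((-1:ℤˣ)^(a + k*(i:ℤ)) : ℤˣ) : ℤ) * F (k * ((j:ℤ) - (i:ℤ)))) :=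
    Finset.prod_congr rfl fun i hi => Finset.prod_congr rfl fun j hj => hApair i j hi hj
  have e2 : (∏ i : Fin (r+1), ∏ j ∈ Ioi i, (u j * v i - u i * v j))
      = ∏ i : Fin (r+1), ∏ j ∈ Ioi i,
        ((((-1:ℤˣ)^(k*(i:ℤ) + 1) : ℤˣ) : ℤ) * F (k * ((j:ℤ) - (i:ℤ)))) :=
    Finset.prod_congr rfl fun i hi => Finset.prod_congr rfl fun j hj => hBpair i j hi hj
  have hmerge : ∀ i : Fin (r+1), ∀ j ∈ Ioi i,
      ((((-1:ℤˣ)^(a + k*(i:ℤ)) : ℤˣ) : ℤ) * F (k * ((j:ℤ) - (i:ℤ)))) *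
        ((((-1:ℤˣ)^(k*(i:ℤ) + 1) : ℤˣ) : ℤ) * F (k * ((j:ℤ) - (i:ℤ))))
      = (((-1:ℤˣ)^(a + 1) : ℤˣ) : ℤ) * F (k * ((j:ℤ) - (i:ℤ))) ^ 2 := by
    intro i j hj
    have hs : ((-1:ℤˣ)^(a + k*(i:ℤ))) * ((-1:ℤˣ)^(k*(i:ℤ) + 1)) = (-1:ℤˣ)^(a+1) := by
      rw [← zpow_add, show a + k*(i:ℤ) + (k*(i:ℤ) + 1) = (a + 1) + 2 * (k*(i:ℤ)) by ring,
        zpow_add, zpow_mul, usq, one_zpow, mul_one]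
    calc ((((-1:ℤˣ)^(a + k*(i:ℤ)) : ℤˣ) : ℤ) * F (k * ((j:ℤ) - (i:ℤ)))) *
        ((((-1:ℤˣ)^(k*(i:ℤ) + 1) : ℤˣ) : ℤ) * F (k * ((j:ℤ) - (i:ℤ))))
        = ((((-1:ℤˣ)^(a + k*(i:ℤ)) * ((-1:ℤˣ)^(k*(i:ℤ) + 1)) : ℤˣ)) : ℤ) *
            F (k * ((j:ℤ) - (i:ℤ))) ^ 2 := by
          push_cast
          ring
      _ = (((-1:ℤˣ)^(a + 1) : ℤˣ) : ℤ) * F (k * ((j:ℤ) - (i:ℤ))) ^ 2 := by rw [hs]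
  have key : (∏ i : Fin (r+1), ∏ j ∈ Ioi i,
        ((((-1:ℤˣ)^(a + k*(i:ℤ)) : ℤˣ) : ℤ) * F (k * ((j:ℤ) - (i:ℤ))))) *
      (∏ i : Fin (r+1), ∏ j ∈ Ioi i,
        ((((-1:ℤˣ)^(k*(i:ℤ) + 1) : ℤˣ) : ℤ) * F (k * ((j:ℤ) - (i:ℤ)))))
      = ∏ i : Fin (r+1), ∏ j ∈ Ioi i,
        ((((-1:ℤˣ)^(a + 1) : ℤˣ) : ℤ) * F (k * ((j:ℤ) - (i:ℤ))) ^ 2) := by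
    rw [← Finset.prod_mul_distrib]
    refine Finset.prod_congr rfl fun i _ => ?_
    rw [← Finset.prod_mul_distrib]
    exact Finset.prod_congr rfl fun j hj => hmerge i j hj
  have hsign : (∏ i : Fin (r+1), ∏ _j ∈ Ioi i, (((-1:ℤˣ)^(a + 1) : ℤˣ) : ℤ))
      = (((-1 : ℤˣ) ^ ((s + k * n + 1) * ((r + 1).choose 2 : ℤ)) : ℤˣ) : ℤ) := by
    simp_rw [Finset.prod_const, Fin.card_Ioi]
    rw [Finset.prod_pow_eq_pow_sum]
    have h2 : ∑ i : Fin (r+1), (r + 1 - 1 - (i:ℕ)) = (r+1).choose 2 := by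
      simpa using hsum_lemma r
    rw [h2, ← Units.val_pow_eq_pow_val, ← zpow_natCast ((-1:ℤˣ)^(a+1)), ← zpow_mul, ha]
  have hFpart : (∏ i : Fin (r+1), ∏ j ∈ Ioi i, F (k * ((j:ℤ) - (i:ℤ))) ^ 2)
      = (∏ i ∈ Finset.Icc 1 r, F ((i : ℤ) * k) ^ (r + 1 - i)) ^ 2 := by
    have step : (∏ i : Fin (r+1), ∏ j ∈ Ioi i, F (k * ((j:ℤ) - (i:ℤ))) ^ 2)
        = (∏ i : Fin (r+1), ∏ j ∈ Ioi i, F (k * ((j:ℤ) - (i:ℤ)))) ^ 2 := by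
      simp_rw [Finset.prod_pow]
    rw [step]
    congr 1
    rw [show (∏ i : Fin (r+1), ∏ j ∈ Ioi i, F (k * ((j:ℤ) - (i:ℤ))))
        = ∏ i : Fin (r+1), ∏ j ∈ Ioi i, (fun d : ℕ => F ((d:ℤ) * k)) ((j:ℕ) - (i:ℕ)) from
      Finset.prod_congr rfl fun i _ => Finset.prod_congr rfl fun j hj => by
        simp only
        congr 1
        have hij : (i:ℕ) < (j:ℕ) := Fin.lt_def.mp (Finset.mem_Ioi.mp hj)
        push_cast [Nat.cast_sub hij.le]
        ring]
    rw [pair_prod r (fun d : ℕ => F ((d:ℤ) * k))]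
  have key2 : (∏ i : Fin (r+1), ∏ j ∈ Ioi i,
        ((((-1:ℤˣ)^(a + 1) : ℤˣ) : ℤ) * F (k * ((j:ℤ) - (i:ℤ))) ^ 2))
      = (((-1 : ℤˣ) ^ ((s + k * n + 1) * ((r + 1).choose 2 : ℤ)) : ℤˣ) : ℤ) *
        (∏ i ∈ Finset.Icc 1 r, F ((i : ℤ) * k) ^ (r + 1 - i)) ^ 2 := by
    simp_rw [Finset.prod_mul_distrib]
    rw [hsign, hFpart]
  rw [e1, e2, mul_assoc, key, key2]
  rw [Fin.prod_univ_eq_prod_range (fun l => (r.choose l : ℤ)) (r+1)]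
  ring
end

section
/- For all natural numbers r and n, the determinant of the (r+1)×(r+1) matrix whose (i,j) entry (0 ≤ i, j ≤ r) is F_{n+i+j}^r equals (−1)^{(n+1)·C(r+1,2)} · (F₁^r·F₂^{r−1}⋯F_r)² · ∏_{i=0}^{r} C(r,i), i.e., (−1)^{(n+1)·C(r+1,2)} · (∏_{i=1}^{r} F_i^{r+1−i})² · ∏_{i=0}^{r} C(r,i). -/
open Finset Real Matrix goldenRatio

noncomputable def xg (r k : ℕ) : ℝ := φ ^ k * ψ ^ (r - k)

noncomputable def dg (r n k : ℕ) : ℝ :=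
  (r.choose k : ℝ) * (-1) ^ (k + r) * φ ^ (n * k) * ψ ^ (n * (r - k)) / (√5) ^ r

lemma fib_real (m : ℕ) : (Nat.fib m : ℝ) * √5 = φ ^ m - ψ ^ m := by
  rw [Real.coe_fib_eq, div_mul_cancel₀ _ (by positivity : (√5:ℝ) ≠ 0)]

lemma carlitz_factor (r n : ℕ) :
    (Matrix.of fun i j : Fin (r + 1) => (Nat.fib (n + (i : ℕ) + (j : ℕ)) : ℝ) ^ r)
      = (Matrix.vandermonde fun k : Fin (r + 1) => xg r k)ᵀ
        * Matrix.diagonal (fun k : Fin (r + 1) => dg r n k)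
        * Matrix.vandermonde fun k : Fin (r + 1) => xg r k := by
  ext i j
  rw [Matrix.mul_apply]
  simp only [Matrix.mul_diagonal, Matrix.transpose_apply, Matrix.vandermonde_apply,
    Matrix.of_apply]
  rw [show (∑ k : Fin (r + 1), xg r (k : ℕ) ^ (i : ℕ) * dg r n (k : ℕ) * xg r (k : ℕ) ^ (j : ℕ))
      = ∑ m ∈ range (r + 1), xg r m ^ (i : ℕ) * dg r n m * xg r m ^ (j : ℕ) from
      Fin.sum_univ_eq_sum_range (fun m => xg r m ^ (i : ℕ) * dg r n m * xg r m ^ (j : ℕ)) (r+1)]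
  rw [Real.coe_fib_eq, div_pow, sub_pow, sum_div]
  refine sum_congr rfl fun m hm => ?_
  rw [mem_range, Nat.lt_succ_iff] at hm
  have h5 : (√5 : ℝ) ^ r ≠ 0 := by positivity
  rw [xg, dg]
  have key : (φ ^ m * ψ ^ (r - m)) ^ (i:ℕ) * (φ ^ (n*m) * ψ ^ (n*(r-m)))
      * (φ ^ m * ψ ^ (r - m)) ^ (j:ℕ)
      = (φ ^ (n + (i:ℕ) + (j:ℕ))) ^ m * (ψ ^ (n + (i:ℕ) + (j:ℕ))) ^ (r - m) := by
    ring
  field_simp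
  linear_combination ((-1:ℝ)) ^ (m + r) * (r.choose m : ℝ) * key

lemma gauss1 (r : ℕ) : ∑ m ∈ range (r + 1), m = (r + 1).choose 2 := by
  rw [Nat.choose_two_right]
  have h := Finset.sum_range_id_mul_two (r + 1)
  omega

lemma gauss2 (r : ℕ) : ∑ m ∈ range (r + 1), (r - m) = (r + 1).choose 2 := by
  rw [← gauss1 r]
  have := Finset.sum_range_reflect (fun j => j) (r + 1)
  simpa using this

lemma pairprod {M : Type*} [CommMonoid M] (r : ℕ) (f : ℕ → M) :
    (∏ i ∈ range (r + 1), ∏ j ∈ Icc (i + 1) r, f (j - i))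
      = ∏ d ∈ Icc 1 r, f d ^ (r + 1 - d) := by
  have h1 : ∀ i ∈ range (r + 1), (∏ j ∈ Icc (i + 1) r, f (j - i))
      = ∏ d ∈ Icc 1 (r - i), f d := by
    intro i hi
    rw [mem_range] at hi
    rw [show Icc (i+1) r = (Icc 1 (r - i)).map (addLeftEmbedding i) from ?_, Finset.prod_map]
    · refine prod_congr rfl fun d _ => ?_
      simp [addLeftEmbedding]
    · rw [Finset.map_add_left_Icc]
      congr 1
      omega
  rw [prod_congr rfl h1]
  rw [prod_comm' (t' := Icc 1 r) (s' := fun d => range (r + 1 - d))]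
  · exact prod_congr rfl fun d _ => by rw [prod_const, card_range]
  · intro i d
    simp only [mem_range, mem_Icc]
    omega
lemma fin_double_prod {M : Type*} [CommMonoid M] (r : ℕ) (g : ℕ → ℕ → M) :
    (∏ i : Fin (r + 1), ∏ j ∈ Ioi i, g (i : ℕ) (j : ℕ))
      = ∏ i ∈ range (r + 1), ∏ j ∈ Icc (i + 1) r, g i j := by
  rw [← Fin.prod_univ_eq_prod_range (fun m => ∏ j ∈ Icc (m + 1) r, g m j) (r + 1)]
  refine Finset.prod_congr rfl fun i _ => ?_
  rw [Finset.Icc_add_one_left_eq_Ioc, show Ioc (i : ℕ) r = (Ioi i).map Fin.valEmbedding from ?_,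
    Finset.prod_map]
  · rfl
  · rw [Fin.map_valEmbedding_Ioi]; ext x; simp only [mem_Ioc, mem_Ioo]; omega

lemma vdm_sq (r : ℕ) :
    (∏ i : Fin (r + 1), ∏ j ∈ Ioi i, (xg r j - xg r i)) ^ 2
      = 5 ^ ((r + 1).choose 2) * (∏ d ∈ Icc 1 r, (Nat.fib d : ℝ) ^ (r + 1 - d)) ^ 2 := by
  have hpt : ∀ i : Fin (r + 1), ∀ j ∈ Ioi i, xg r j - xg r i
      = (Nat.fib ((j : ℕ) - (i : ℕ)) : ℝ) * √5 * (φ ^ (i : ℕ) * ψ ^ (r - (j : ℕ))) := by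
    intro i j hj
    rw [mem_Ioi] at hj
    have hij : (i : ℕ) < (j : ℕ) := hj
    have hjr : (j : ℕ) ≤ r := Nat.lt_succ_iff.mp j.isLt
    have e1 : φ ^ (j : ℕ) = φ ^ (i : ℕ) * φ ^ ((j : ℕ) - (i : ℕ)) := by
      rw [← pow_add]; congr 1; omega
    have e2 : ψ ^ (r - (i : ℕ)) = ψ ^ (r - (j : ℕ)) * ψ ^ ((j : ℕ) - (i : ℕ)) := by
      rw [← pow_add]; congr 1; omega
    rw [xg, xg, e1, e2, fib_real]
    ring
  rw [prod_congr rfl fun i _ => prod_congr rfl (hpt i)]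
  simp only [prod_mul_distrib]
  set c := (r + 1).choose 2 with hc
  set A := ∑ m ∈ range (r + 1), m * (r - m) with hA
  have hF : (∏ i : Fin (r + 1), ∏ j ∈ Ioi i, (Nat.fib ((j : ℕ) - (i : ℕ)) : ℝ))
      = ∏ d ∈ Icc 1 r, (Nat.fib d : ℝ) ^ (r + 1 - d) := by
    rw [fin_double_prod r (fun a b => (Nat.fib (b - a) : ℝ))]
    exact pairprod r (fun d => (Nat.fib d : ℝ))
  have hS5 : (∏ i : Fin (r + 1), ∏ _j ∈ Ioi i, (√5 : ℝ)) = √5 ^ c := by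
    simp only [prod_const]
    rw [prod_pow_eq_pow_sum]
    congr 1
    simp only [Fin.card_Ioi, Nat.add_sub_cancel]
    rw [Fin.sum_univ_eq_sum_range (fun m => r - m) (r + 1), gauss2]
  have hPφ : (∏ i : Fin (r + 1), ∏ _j ∈ Ioi i, φ ^ (i : ℕ)) = φ ^ A := by
    simp only [prod_const, ← pow_mul]
    rw [prod_pow_eq_pow_sum]
    congr 1
    simp only [Fin.card_Ioi, Nat.add_sub_cancel]
    rw [Fin.sum_univ_eq_sum_range (fun m => m * (r - m)) (r + 1)]
  have hPψ : (∏ i : Fin (r + 1), ∏ j ∈ Ioi i, ψ ^ (r - (j : ℕ))) = ψ ^ A := by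
    rw [prod_comm' (t' := (univ : Finset (Fin (r + 1)))) (s' := fun j => Iio j)
      (by intro x y; simp [mem_Ioi, mem_Iio])]
    simp only [prod_const, Fin.card_Iio, ← pow_mul]
    rw [prod_pow_eq_pow_sum]
    congr 1
    rw [Fin.sum_univ_eq_sum_range (fun m => (r - m) * m) (r + 1), hA]
    exact sum_congr rfl fun m _ => mul_comm _ _
  rw [hF, hS5, hPφ, hPψ, ← mul_pow φ ψ A, goldenRatio_mul_goldenConj]
  have h1 : ((√5 : ℝ) ^ c) ^ 2 = 5 ^ c := by
    rw [← pow_mul, mul_comm c 2, pow_mul, Real.sq_sqrt (by norm_num : (0:ℝ) ≤ 5)]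
  have h2 : (((-1) : ℝ) ^ A) ^ 2 = 1 := by
    rw [← pow_mul, mul_comm A 2, pow_mul]; norm_num
  rw [mul_pow, mul_pow, h1, h2, mul_one]
  ring
lemma diag_prod (r n : ℕ) :
    (∏ k : Fin (r + 1), dg r n (k : ℕ))
      = ((-1 : ℝ) ^ ((n + 1) * ((r + 1).choose 2)) * ∏ m ∈ range (r + 1), (r.choose m : ℝ))
        / 5 ^ ((r + 1).choose 2) := by
  set c := (r + 1).choose 2 with hc
  have hrc : r * (r + 1) = c * 2 := by
    obtain ⟨t, ht⟩ := Nat.even_mul_succ_self r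
    rw [hc, Nat.choose_two_right, Nat.add_sub_cancel]
    have h2 : (r + 1) * r = r * (r + 1) := mul_comm _ _
    omega
  rw [Fin.prod_univ_eq_prod_range (fun m => dg r n m) (r + 1)]
  simp only [dg]
  rw [prod_div_distrib, prod_const, card_range, ← pow_mul]
  rw [show (√5 : ℝ) ^ (r * (r + 1)) = 5 ^ c from by
    rw [hrc, mul_comm c 2, pow_mul, Real.sq_sqrt (by norm_num : (0:ℝ) ≤ 5)]]
  congr 1
  simp only [prod_mul_distrib]
  rw [prod_pow_eq_pow_sum (range (r + 1)) (fun m => m + r) (-1 : ℝ),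
    prod_pow_eq_pow_sum (range (r + 1)) (fun m => n * m) φ,
    prod_pow_eq_pow_sum (range (r + 1)) (fun m => n * (r - m)) ψ]
  have e1 : ∑ m ∈ range (r + 1), (m + r) = c + r * (r + 1) := by
    rw [sum_add_distrib, gauss1, sum_const, card_range, smul_eq_mul, ← hc]
    ring
  have e2 : ∑ m ∈ range (r + 1), n * m = n * c := by rw [← mul_sum, gauss1, hc]
  have e3 : ∑ m ∈ range (r + 1), n * (r - m) = n * c := by rw [← mul_sum, gauss2, hc]
  rw [e1, e2, e3, pow_add (-1 : ℝ) c (r * (r + 1)), hrc, mul_comm c 2, pow_mul]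
  have hps : φ ^ (n * c) * ψ ^ (n * c) = ((-1) : ℝ) ^ (n * c) := by
    rw [← mul_pow]; norm_num
  rw [show (n + 1) * c = n * c + c from by ring, pow_add]
  norm_num
  linear_combination (∏ m ∈ range (r + 1), (r.choose m : ℝ)) * ((-1 : ℝ) ^ c) * hps
lemma carlitz_real (r n : ℕ) :
    Matrix.det (Matrix.of fun i j : Fin (r + 1) =>
        (Nat.fib (n + (i : ℕ) + (j : ℕ)) : ℝ) ^ r) =
      (-1 : ℝ) ^ ((n + 1) * ((r + 1).choose 2)) *
      (∏ i ∈ Finset.Icc 1 r, (Nat.fib i : ℝ) ^ (r + 1 - i)) ^ 2 *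
      ∏ i ∈ Finset.range (r + 1), (r.choose i : ℝ) := by
  rw [carlitz_factor, Matrix.det_mul, Matrix.det_mul, Matrix.det_transpose,
    Matrix.det_vandermonde, Matrix.det_diagonal, diag_prod,
    show ∀ P N D : ℝ, P * (N / D) * P = P ^ 2 * N / D from fun P N D => by ring,
    vdm_sq r]
  have h5 : (5 : ℝ) ^ ((r + 1).choose 2) ≠ 0 := by positivity
  field_simp

/-- Carlitz's formula (1): `det(F_{n+i+j}^r) = (−1)^{(n+1)C(r+1,2)} ·
(∏_{i=1}^{r} F_i^{r+1−i})² · ∏ᵢ C(r,i)`. -/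
theorem carlitz_det (r n : ℕ) :
    Matrix.det (Matrix.of fun i j : Fin (r + 1) =>
        (Nat.fib (n + (i : ℕ) + (j : ℕ)) : ℤ) ^ r) =
      (-1 : ℤ) ^ ((n + 1) * ((r + 1).choose 2)) *
      (∏ i ∈ Finset.Icc 1 r, (Nat.fib i : ℤ) ^ (r + 1 - i)) ^ 2 *
      ∏ i ∈ Finset.range (r + 1), (r.choose i : ℤ) := by
  apply Int.cast_injective (α := ℝ)
  have hdet := RingHom.map_det (Int.castRingHom ℝ) (Matrix.of fun i j : Fin (r + 1) =>
        (Nat.fib (n + (i : ℕ) + (j : ℕ)) : ℤ) ^ r)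
  simp only [Int.coe_castRingHom] at hdet
  rw [hdet]
  have hmm : (Int.castRingHom ℝ).mapMatrix (Matrix.of fun i j : Fin (r + 1) =>
        (Nat.fib (n + (i : ℕ) + (j : ℕ)) : ℤ) ^ r)
      = Matrix.of fun i j : Fin (r + 1) => (Nat.fib (n + (i : ℕ) + (j : ℕ)) : ℝ) ^ r := by
    ext i j
    simp [RingHom.mapMatrix_apply, Matrix.map_apply]
  rw [hmm]
  rw [carlitz_real r n]
  push_cast
  ring
end

section
/- For every natural number n, the determinant of the 3×3 matrix with rows (F_n², F_{n+1}², F_{n+2}²), (F_{n+1}², F_{n+2}², F_{n+3}²), (F_{n+2}², F_{n+3}², F_{n+4}²) equals 2·(−1)^{n+1}. -/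
lemma fib_cassini (n : ℕ) :
    (Nat.fib (n + 1) : ℤ) ^ 2 - Nat.fib (n + 1) * Nat.fib n - (Nat.fib n : ℤ) ^ 2
      = (-1) ^ n := by
  induction n with
  | zero => simp
  | succ k ih =>
    rw [Nat.fib_add_two]
    push_cast
    rw [pow_succ]
    linear_combination (-1 : ℤ) * ih

/-- Alfred's problem: the determinant of the 3×3 matrix of consecutive squared
Fibonacci numbers equals `2·(−1)^{n+1}`. -/
theorem alfred_det (n : ℕ) :
    Matrix.det !![(Nat.fib n : ℤ) ^ 2, (Nat.fib (n + 1) : ℤ) ^ 2, (Nat.fib (n + 2) : ℤ) ^ 2;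
        (Nat.fib (n + 1) : ℤ) ^ 2, (Nat.fib (n + 2) : ℤ) ^ 2, (Nat.fib (n + 3) : ℤ) ^ 2;
        (Nat.fib (n + 2) : ℤ) ^ 2, (Nat.fib (n + 3) : ℤ) ^ 2, (Nat.fib (n + 4) : ℤ) ^ 2] =
      2 * (-1 : ℤ) ^ (n + 1) := by
  have h := fib_cassini n
  have h2 : ((-1 : ℤ) ^ n) ^ 2 = 1 := by
    rw [← pow_mul, mul_comm, pow_mul]; norm_num
  have hf2 : (Nat.fib (n + 2) : ℤ) = Nat.fib n + Nat.fib (n + 1) := by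
    rw [Nat.fib_add_two]; push_cast; ring
  have hf3 : (Nat.fib (n + 3) : ℤ) = Nat.fib n + 2 * Nat.fib (n + 1) := by
    rw [show n + 3 = (n + 1) + 2 from rfl, Nat.fib_add_two, Nat.fib_add_two]
    push_cast; ring
  have hf4 : (Nat.fib (n + 4) : ℤ) = 2 * Nat.fib n + 3 * Nat.fib (n + 1) := by
    rw [show n + 4 = (n + 2) + 2 from rfl, Nat.fib_add_two]
    push_cast; rw [hf2, hf3]; ring
  rw [hf2, hf3, hf4]
  simp [Matrix.det_fin_three]
  set a := (Nat.fib n : ℤ)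
  set b := (Nat.fib (n + 1) : ℤ)
  have h3 : (b ^ 2 - b * a - a ^ 2) ^ 3 = (-1) ^ n := by
    rw [h, pow_succ, h2, one_mul]
  linear_combination (-2 : ℤ) * h3
end

section
/- Let r be a natural number and let X₀, …, X_r, D₁, …, D_r, and E₁, …, E_r be real numbers. Then the determinant of the (r+1)×(r+1) matrix whose (i,j) entry (0 ≤ i, j ≤ r) is ∏_{ℓ=j+1}^{r} (X_i + D_ℓ) · ∏_{m=1}^{j} (X_i + E_m) equals ∏_{0 ≤ i < j ≤ r} (X_j − X_i) · ∏_{1 ≤ i ≤ j ≤ r} (D_j − E_i). -/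
open Finset

namespace KratAux
open Polynomial Matrix

variable {R : Type*} [CommRing R]

lemma prod_shift_range {M : Type*} [CommMonoid M] (n : ℕ) (f : ℕ → M) :
    ∏ i ∈ Finset.range n, f (i + 1) = ∏ k ∈ Finset.Icc 1 n, f k := by
  rw [← Finset.Ico_add_one_right_eq_Icc, Finset.prod_Ico_eq_prod_range]
  simp [add_comm]

lemma prod_shift {M : Type*} [CommMonoid M] (n : ℕ) (f : ℕ → M) :
    ∏ i : Fin n, f ((i : ℕ) + 1) = ∏ k ∈ Finset.Icc 1 n, f k := by
  rw [Fin.prod_univ_eq_prod_range (fun i => f (i + 1)) n, prod_shift_range]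

lemma prod_Iio_fin {M : Type*} [CommMonoid M] {n : ℕ} (b : Fin n) (f : ℕ → M) :
    ∏ i ∈ Finset.Iio b, f (i : ℕ) = ∏ i ∈ Finset.range (b : ℕ), f i := by
  rw [← Nat.Iio_eq_range, ← Fin.map_valEmbedding_Iio, Finset.prod_map]
  rfl

lemma pairs_swap {M : Type*} [CommMonoid M] (n : ℕ) (g : ℕ → ℕ → M) :
    ∏ i : Fin n, ∏ j ∈ Finset.Ioi i, g ((i : ℕ) + 1) ((j : ℕ) + 1)
      = ∏ k ∈ Finset.Icc 1 n, ∏ m ∈ Finset.Icc 1 (k - 1), g m k := by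
  rw [Finset.prod_comm' (t' := Finset.univ) (s' := fun j => Finset.Iio j)
    (by intro x y; simp [Finset.mem_Ioi, Finset.mem_Iio])]
  rw [← prod_shift n (fun k => ∏ m ∈ Finset.Icc 1 (k - 1), g m k)]
  refine Finset.prod_congr rfl fun j _ => ?_
  rw [Nat.add_sub_cancel, prod_Iio_fin j (fun i => g (i + 1) ((j : ℕ) + 1)), prod_shift_range (j : ℕ) (fun m => g m ((j : ℕ) + 1))]

lemma triangle_swap {M : Type*} [CommMonoid M] (n : ℕ) (h : ℕ → ℕ → M) :
    ∏ k ∈ Finset.Icc 1 n, ∏ l ∈ Finset.Icc k n, h k l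
      = ∏ l ∈ Finset.Icc 1 n, ∏ k ∈ Finset.Icc 1 l, h k l :=
  Finset.prod_comm' (by intro x y; simp only [Finset.mem_Icc]; omega)


noncomputable def pcol (r : ℕ) (D E : ℕ → R) (j : ℕ) : R[X] :=
  (∏ l ∈ Finset.Icc (j + 1) r, (X + C (D l))) * ∏ m ∈ Finset.Icc 1 j, (X + C (E m))

lemma eval_pcol (r : ℕ) (D E : ℕ → R) (j : ℕ) (x : R) :
    (pcol r D E j).eval x
      = (∏ l ∈ Finset.Icc (j + 1) r, (x + D l)) * ∏ m ∈ Finset.Icc 1 j, (x + E m) := by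
  simp [pcol, eval_prod]

lemma natDegree_pcol_le [Nontrivial R] (r : ℕ) (D E : ℕ → R) (j : ℕ) (hj : j ≤ r) :
    (pcol r D E j).natDegree ≤ r := by
  have h1 : (∏ l ∈ Finset.Icc (j + 1) r, (X + C (D l))).natDegree ≤ r - j := by
    refine le_trans (Polynomial.natDegree_prod_le _ _) ?_
    simp [natDegree_X_add_C, Nat.card_Icc]
  have h2 : (∏ m ∈ Finset.Icc 1 j, (X + C (E m))).natDegree ≤ j := by
    refine le_trans (Polynomial.natDegree_prod_le _ _) ?_
    simp [natDegree_X_add_C, Nat.card_Icc]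
  refine le_trans (Polynomial.natDegree_mul_le) ?_
  omega

noncomputable def cmat (r : ℕ) (D E : ℕ → R) : Matrix (Fin (r + 1)) (Fin (r + 1)) R :=
  Matrix.of fun k j => (pcol r D E (j : ℕ)).coeff (k : ℕ)

lemma det_eq_vandermonde_mul [Nontrivial R] (r : ℕ) (D E : ℕ → R) (v : Fin (r + 1) → R) :
    Matrix.det (Matrix.of fun i j : Fin (r + 1) =>
        (∏ l ∈ Finset.Icc ((j : ℕ) + 1) r, (v i + D l)) *
        ∏ m ∈ Finset.Icc 1 (j : ℕ), (v i + E m))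
      = (Matrix.vandermonde v).det * (cmat r D E).det := by
  rw [← Matrix.det_mul]
  congr 1
  ext i j
  rw [Matrix.mul_apply, Matrix.of_apply, ← eval_pcol r D E (j : ℕ) (v i),
    eval_eq_sum_range' (Nat.lt_succ_of_le (natDegree_pcol_le r D E (j : ℕ) j.is_le)) (v i),
    ← Fin.sum_univ_eq_sum_range (fun k => (pcol r D E (j : ℕ)).coeff k * v i ^ k) (r + 1)]
  refine Finset.sum_congr rfl fun k _ => ?_
  simp [cmat, Matrix.vandermonde, mul_comm]


lemma det_special (r : ℕ) (D E : ℕ → R) :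
    Matrix.det (Matrix.of fun i j : Fin (r + 1) =>
        (∏ l ∈ Finset.Icc ((j : ℕ) + 1) r,
          ((if (i : ℕ) = 0 then 0 else -E (i : ℕ)) + D l)) *
        ∏ m ∈ Finset.Icc 1 (j : ℕ),
          ((if (i : ℕ) = 0 then 0 else -E (i : ℕ)) + E m))
      = (-1) ^ r * ((∏ m ∈ Finset.Icc 1 r, E m) *
          ∏ k ∈ Finset.Icc 1 r,
            ((∏ l ∈ Finset.Icc k r, (D l - E k)) *
              ∏ m ∈ Finset.Icc 1 (k - 1), (E m - E k))) := by
  set v : Fin (r + 1) → R := fun i => if (i : ℕ) = 0 then 0 else -E (i : ℕ) with hv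
  set M : Matrix (Fin (r + 1)) (Fin (r + 1)) R := Matrix.of fun i j =>
      (∏ l ∈ Finset.Icc ((j : ℕ) + 1) r, (v i + D l)) *
      ∏ m ∈ Finset.Icc 1 (j : ℕ), (v i + E m) with hM
  set σ : Equiv.Perm (Fin (r + 1)) := finRotate (r + 1) with hσ
  have hσval : ∀ i : Fin (r + 1), ((σ i : Fin (r + 1)) : ℕ)
      = if i = Fin.last r then 0 else (i : ℕ) + 1 := by
    intro i
    rw [hσ, finRotate_succ_apply, Fin.val_add_one]
  have hzero : ∀ a b : Fin (r + 1), (a : ℕ) ≠ 0 → (a : ℕ) ≤ (b : ℕ) → M a b = 0 := by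
    intro a b ha hab
    have : v a + E (a : ℕ) = 0 := by
      simp only [hv, if_neg ha, neg_add_cancel]
    rw [hM, Matrix.of_apply]
    refine mul_eq_zero_of_right _ ?_
    exact Finset.prod_eq_zero (Finset.mem_Icc.mpr ⟨Nat.one_le_iff_ne_zero.mpr ha, hab⟩) this
  have htri : (M.submatrix σ id).det = ∏ i : Fin (r + 1), M (σ i) i := by
    refine Matrix.det_of_lowerTriangular _ ?_
    intro a b hab
    have hab' : a < b := hab
    have hne : a ≠ Fin.last r := by
      intro h
      exact absurd hab' (by simp [h, Fin.lt_iff_val_lt_val]; omega)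
    refine hzero (σ a) b ?_ ?_
    · rw [hσval a, if_neg hne]; omega
    · rw [hσval a, if_neg hne]
      have : (a : ℕ) < (b : ℕ) := hab'
      omega
  have hperm : (M.submatrix σ id).det = (Equiv.Perm.sign σ : ℤ) * M.det :=
    Matrix.det_permute σ M
  have hsign : (Equiv.Perm.sign σ : ℤ) = (-1) ^ r := by
    rw [hσ, sign_finRotate]; simp
  have hMdet : M.det = (-1) ^ r * ∏ i : Fin (r + 1), M (σ i) i := by
    have := hperm.symm.trans htri
    rw [hsign] at this
    push_cast at this ⊢
    have h2 : ((-1 : R) ^ r) * (((-1 : R) ^ r) * M.det) = (-1 : R) ^ r * ∏ i, M (σ i) i := by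
      rw [this]
    rwa [← mul_assoc, ← pow_add, ← two_mul, pow_mul, neg_one_sq, one_pow, one_mul] at h2
  rw [hMdet, Fin.prod_univ_castSucc]
  have hlast : M (σ (Fin.last r)) (Fin.last r) = ∏ m ∈ Finset.Icc 1 r, E m := by
    have h0 : ((σ (Fin.last r) : Fin (r + 1)) : ℕ) = 0 := by rw [hσval, if_pos rfl]
    rw [hM, Matrix.of_apply]
    have hv0 : v (σ (Fin.last r)) = 0 := by simp only [hv]; exact if_pos h0
    rw [hv0]
    simp [Fin.val_last, Finset.Icc_eq_empty (by omega : ¬ r + 1 ≤ r)]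
  have hdiag : ∀ i : Fin r,
      M (σ i.castSucc) i.castSucc
        = (∏ l ∈ Finset.Icc ((i : ℕ) + 1) r, (D l - E ((i : ℕ) + 1))) *
          ∏ m ∈ Finset.Icc 1 (i : ℕ), (E m - E ((i : ℕ) + 1)) := by
    intro i
    have hne : i.castSucc ≠ Fin.last r := by
      intro h
      have := congrArg Fin.val h
      simp [Fin.val_last] at this
      omega
    have hval : ((σ i.castSucc : Fin (r + 1)) : ℕ) = (i : ℕ) + 1 := by
      rw [hσval, if_neg hne]; simp
    have hvv : v (σ i.castSucc) = -E ((i : ℕ) + 1) := by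
      rw [hv]; simp only [hval]; rw [if_neg (by omega)]
    rw [hM, Matrix.of_apply, hvv]
    congr 1
    · refine Finset.prod_congr (by simp) fun l _ => by ring
    · refine Finset.prod_congr (by simp) fun m _ => by ring
  calc (-1 : R) ^ r * ((∏ i : Fin r, M (σ i.castSucc) i.castSucc) * M (σ (Fin.last r)) (Fin.last r))
      = (-1) ^ r * ((∏ i : Fin r,
          ((∏ l ∈ Finset.Icc ((i : ℕ) + 1) r, (D l - E ((i : ℕ) + 1))) *
            ∏ m ∈ Finset.Icc 1 (i : ℕ), (E m - E ((i : ℕ) + 1)))) * ∏ m ∈ Finset.Icc 1 r, E m) := by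
        rw [hlast]
        congr 2
        exact Finset.prod_congr rfl fun i _ => hdiag i
    _ = (-1) ^ r * ((∏ m ∈ Finset.Icc 1 r, E m) *
          ∏ k ∈ Finset.Icc 1 r,
            ((∏ l ∈ Finset.Icc k r, (D l - E k)) *
              ∏ m ∈ Finset.Icc 1 (k - 1), (E m - E k))) := by
        rw [← prod_shift r (fun k => (∏ l ∈ Finset.Icc k r, (D l - E k)) *
              ∏ m ∈ Finset.Icc 1 (k - 1), (E m - E k))]
        simp only [Nat.add_sub_cancel]
        exact congrArg _ (mul_comm _ _)


lemma vdm_special (r : ℕ) (E : ℕ → R) :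
    (Matrix.vandermonde (fun i : Fin (r + 1) =>
        if (i : ℕ) = 0 then 0 else -E (i : ℕ))).det
      = ((-1) ^ r * ∏ m ∈ Finset.Icc 1 r, E m) *
          ∏ k ∈ Finset.Icc 1 r, ∏ m ∈ Finset.Icc 1 (k - 1), (E m - E k) := by
  set v : Fin (r + 1) → R := fun i => if (i : ℕ) = 0 then 0 else -E (i : ℕ) with hv
  have hv0 : v 0 = 0 := by simp [hv]
  have hvs : ∀ i : Fin r, v i.succ = -E ((i : ℕ) + 1) := by
    intro i
    simp [hv, Fin.val_succ]
  rw [Matrix.det_vandermonde, Fin.prod_univ_succ]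
  have h1 : ∏ j ∈ Finset.Ioi (0 : Fin (r + 1)), (v j - v 0)
      = (-1) ^ r * ∏ m ∈ Finset.Icc 1 r, E m := by
    rw [Fin.prod_Ioi_zero]
    have : ∀ i : Fin r, v i.succ - v 0 = (-1) * E ((i : ℕ) + 1) := by
      intro i
      rw [hvs, hv0]
      ring
    rw [Finset.prod_congr rfl fun i _ => this i, Finset.prod_mul_distrib,
      Finset.prod_const, prod_shift r E]
    simp
  have h2 : ∏ i : Fin r, ∏ j ∈ Finset.Ioi i.succ, (v j - v i.succ)
      = ∏ k ∈ Finset.Icc 1 r, ∏ m ∈ Finset.Icc 1 (k - 1), (E m - E k) := by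
    have hstep : ∀ i : Fin r, ∏ j ∈ Finset.Ioi i.succ, (v j - v i.succ)
        = ∏ j ∈ Finset.Ioi i, (E ((i : ℕ) + 1) - E ((j : ℕ) + 1)) := by
      intro i
      rw [Fin.prod_Ioi_succ]
      refine Finset.prod_congr rfl fun j _ => ?_
      rw [hvs, hvs]
      ring
    rw [Finset.prod_congr rfl fun i _ => hstep i]
    exact pairs_swap r (fun a b => E a - E b)
  rw [h1, h2]


lemma cmat_det_of_domain {S : Type*} [CommRing S] [IsDomain S] [Nontrivial S]
    (r : ℕ) (D E : ℕ → S)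
    (hE0 : ∀ i, 1 ≤ i → i ≤ r → E i ≠ 0)
    (hEne : ∀ i j, 1 ≤ i → i < j → j ≤ r → E i ≠ E j) :
    (cmat r D E).det = ∏ j ∈ Finset.Icc 1 r, ∏ i ∈ Finset.Icc 1 j, (D j - E i) := by
  set v : Fin (r + 1) → S := fun i => if (i : ℕ) = 0 then 0 else -E (i : ℕ) with hv
  have hvne : ∀ i j : Fin (r + 1), i < j → v j - v i ≠ 0 := by
    intro i j hij
    have hij' : (i : ℕ) < (j : ℕ) := hij
    have hjr : (j : ℕ) ≤ r := by omega
    by_cases hi : (i : ℕ) = 0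
    · rw [hv]
      simp only [if_pos hi, if_neg (by omega : ¬ (j : ℕ) = 0), sub_zero, neg_ne_zero]
      exact hE0 _ (by omega) hjr
    · rw [hv]
      simp only [if_neg hi, if_neg (by omega : ¬ (j : ℕ) = 0)]
      intro h
      have : E ((i : ℕ)) = E ((j : ℕ)) := by
        have := sub_eq_zero.mp h
        have := neg_injective this
        exact this.symm
      exact hEne _ _ (by omega) hij' hjr this
  have hvdm : (Matrix.vandermonde v).det ≠ 0 := by
    rw [Matrix.det_vandermonde]
    refine Finset.prod_ne_zero_iff.mpr fun i _ => ?_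
    refine Finset.prod_ne_zero_iff.mpr fun j hj => ?_
    exact hvne i j (Finset.mem_Ioi.mp hj)
  have h1 := det_eq_vandermonde_mul r D E v
  have h2 := det_special r D E
  rw [hv] at h1
  have h3 : (Matrix.vandermonde v).det * (cmat r D E).det
      = (-1) ^ r * ((∏ m ∈ Finset.Icc 1 r, E m) *
          ∏ k ∈ Finset.Icc 1 r,
            ((∏ l ∈ Finset.Icc k r, (D l - E k)) *
              ∏ m ∈ Finset.Icc 1 (k - 1), (E m - E k))) := by
    rw [← h2, ← h1]
  have h4 : (Matrix.vandermonde v).det * (cmat r D E).det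
      = (Matrix.vandermonde v).det *
          ∏ j ∈ Finset.Icc 1 r, ∏ i ∈ Finset.Icc 1 j, (D j - E i) := by
    rw [h3, hv, vdm_special r E]
    rw [Finset.prod_mul_distrib]
    rw [triangle_swap r (fun k l => D l - E k)]
    ring
  exact mul_left_cancel₀ hvdm h4


lemma cmat_det_real (r : ℕ) (D E : ℕ → ℝ) :
    (cmat r D E).det = ∏ j ∈ Finset.Icc 1 r, ∏ i ∈ Finset.Icc 1 j, (D j - E i) := by
  set D' : ℕ → Polynomial ℝ := fun l => C (D l) with hD'
  set E' : ℕ → Polynomial ℝ := fun m => C (E m) + C (m : ℝ) * X with hE'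
  set φ : Polynomial ℝ →+* ℝ := Polynomial.evalRingHom 0 with hφ
  have hcoeff1 : ∀ m : ℕ, (E' m).coeff 1 = (m : ℝ) := by
    intro m
    simp [hE', Polynomial.coeff_C]
  have hE0 : ∀ i, 1 ≤ i → i ≤ r → E' i ≠ 0 := by
    intro i h1 _ h
    have h2 := congrArg (fun p => Polynomial.coeff p 1) h
    rw [hcoeff1] at h2
    simp at h2
    omega
  have hEne : ∀ i j, 1 ≤ i → i < j → j ≤ r → E' i ≠ E' j := by
    intro i j h1 hij _ h
    have h2 := congrArg (fun p => Polynomial.coeff p 1) h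
    rw [hcoeff1, hcoeff1] at h2
    have : i = j := Nat.cast_injective h2
    omega
  have hdom := cmat_det_of_domain r D' E' hE0 hEne
  have hpc : ∀ j : ℕ, (pcol r D' E' j).map φ = pcol r D E j := by
    intro j
    simp only [pcol, Polynomial.map_mul, Polynomial.map_prod, Polynomial.map_add,
      Polynomial.map_X, Polynomial.map_C, hφ, hD', hE']
    simp [Polynomial.coe_evalRingHom]
  have hcm : cmat r D E = (cmat r D' E').map φ := by
    ext k j
    simp only [cmat, Matrix.map_apply, Matrix.of_apply, ← hpc, Polynomial.coeff_map]
  have hdet : ((cmat r D' E').map ⇑φ).det = φ ((cmat r D' E').det) :=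
    (RingHom.map_det φ _).symm
  rw [hcm, hdet, hdom, map_prod]
  refine Finset.prod_congr rfl fun j _ => ?_
  rw [map_prod]
  refine Finset.prod_congr rfl fun i _ => ?_
  simp [hφ, hD', hE']

end KratAux


/-- Lemma 8 (Krattenthaler):
`det(∏_{ℓ=j+1}^{r}(X_i+D_ℓ) · ∏_{m=1}^{j}(X_i+E_m))
  = ∏_{i<j}(X_j−X_i) · ∏_{1≤i≤j≤r}(D_j−E_i)`. -/
theorem krattenthaler_det (r : ℕ) (X : Fin (r + 1) → ℝ) (D E : ℕ → ℝ) :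
    Matrix.det (Matrix.of fun i j : Fin (r + 1) =>
        (∏ ℓ ∈ Finset.Icc ((j : ℕ) + 1) r, (X i + D ℓ)) *
        ∏ m ∈ Finset.Icc 1 (j : ℕ), (X i + E m)) =
      (∏ i : Fin (r + 1), ∏ j ∈ Finset.Ioi i, (X j - X i)) *
      ∏ j ∈ Finset.Icc 1 r, ∏ i ∈ Finset.Icc 1 j, (D j - E i) := by
  rw [KratAux.det_eq_vandermonde_mul r D E X, Matrix.det_vandermonde,
    KratAux.cmat_det_real r D E]
end

section
/- Let r be a natural number, and let a₁, …, a_r, b₁, …, b_r, α₁, …, α_r, β₁, …, β_r, X₀, …, X_r, Y₀, …, Y_r be real numbers. Then the determinant of the (r+1)×(r+1) matrix whose (i,j) entry (0 ≤ i, j ≤ r) is ∏_{ℓ=j+1}^{r} (a_ℓ·X_i + b_ℓ·Y_i) · ∏_{m=1}^{j} (α_m·X_i + β_m·Y_i) equals ∏_{0 ≤ i < j ≤ r} (X_i·Y_j − X_j·Y_i) · ∏_{1 ≤ i ≤ j ≤ r} (β_i·a_j − α_i·b_j). -/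
open Finset

section KratAux
open Polynomial

lemma krat_ext_cofinite {f g : ℝ → ℝ} (hf : Continuous f) (hg : Continuous g)
    (h : {t : ℝ | f t ≠ g t}.Finite) : f = g :=
  Continuous.ext_on (h.countable.dense_compl ℝ) hf hg (fun _ ht => not_not.1 ht)

lemma krat_finite_lin (A B : ℝ) (hB : B ≠ 0) : {t : ℝ | A + t * B = 0}.Finite := by
  apply Set.Finite.subset (Set.finite_singleton (-A / B))
  intro t ht
  simp only [Set.mem_setOf_eq] at ht
  simp only [Set.mem_singleton_iff]
  field_simp
  linarith

lemma krat_finite_quad (A B C : ℝ) (hC : C ≠ 0) : {t : ℝ | A + B * t + C * t^2 = 0}.Finite := by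
  have hp : (Polynomial.C A + Polynomial.C B * X + Polynomial.C C * X^2) ≠ 0 := by
    intro h
    have h2 := congrArg (fun p => Polynomial.coeff p 2) h
    simp [coeff_add, coeff_C, Polynomial.coeff_C_mul, Polynomial.coeff_X_pow] at h2
    exact hC h2
  apply Set.Finite.subset (Polynomial.finite_setOf_isRoot hp)
  intro t ht
  simp only [Set.mem_setOf_eq] at ht
  simp only [Set.mem_setOf_eq, Polynomial.IsRoot, eval_add, eval_mul, eval_C, eval_X, eval_pow]
  linarith

end KratAux

noncomputable section KratMain
namespace Krat
open Polynomial

def lin (c d : ℕ → ℝ) (ℓ : ℕ) : Polynomial ℝ := C (c ℓ) + C (d ℓ) * X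

variable (r : ℕ) (a b α β : ℕ → ℝ)

def qp (j : ℕ) : Polynomial ℝ :=
  (∏ ℓ ∈ Icc (j+1) r, lin a b ℓ) * ∏ m ∈ Icc 1 j, lin α β m

def Cmat : Matrix (Fin (r+1)) (Fin (r+1)) ℝ := fun k j => (qp r a b α β (j:ℕ)).coeff (k:ℕ)

def Vmat (Xv Yv : Fin (r+1) → ℝ) : Matrix (Fin (r+1)) (Fin (r+1)) ℝ :=
  fun i k => Xv i ^ (r - (k:ℕ)) * Yv i ^ (k:ℕ)

def Mmat (Xv Yv : Fin (r+1) → ℝ) : Matrix (Fin (r+1)) (Fin (r+1)) ℝ :=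
  Matrix.of fun i j => (∏ ℓ ∈ Icc ((j:ℕ)+1) r, (a ℓ * Xv i + b ℓ * Yv i)) *
    ∏ m ∈ Icc 1 (j:ℕ), (α m * Xv i + β m * Yv i)

lemma natDegree_lin (c d : ℕ → ℝ) (ℓ : ℕ) : (lin c d ℓ).natDegree ≤ 1 := by
  unfold lin
  apply le_trans (natDegree_add_le _ _)
  simp [natDegree_C_mul_le]
  exact le_trans (natDegree_mul_le) (by simp)

lemma natDegree_qp (j : ℕ) (hj : j ≤ r) : (qp r a b α β j).natDegree ≤ r := by
  unfold qp
  apply le_trans (natDegree_mul_le)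
  have h1 : (∏ ℓ ∈ Icc (j+1) r, lin a b ℓ).natDegree ≤ r - j := by
    apply le_trans (natDegree_prod_le _ _)
    apply le_trans (Finset.sum_le_card_nsmul _ _ 1 (fun x _ => natDegree_lin a b x))
    simp [Nat.card_Icc]
  have h2 : (∏ m ∈ Icc 1 j, lin α β m).natDegree ≤ j := by
    apply le_trans (natDegree_prod_le _ _)
    apply le_trans (Finset.sum_le_card_nsmul _ _ 1 (fun x _ => natDegree_lin α β x))
    simp [Nat.card_Icc]
  omega

lemma prod_lin_eval (x y : ℝ) (hx : x ≠ 0) (s : Finset ℕ) (c d : ℕ → ℝ) :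
    x ^ s.card * eval (y/x) (∏ ℓ ∈ s, lin c d ℓ) = ∏ ℓ ∈ s, (c ℓ * x + d ℓ * y) := by
  rw [eval_prod, ← Finset.prod_const, ← Finset.prod_mul_distrib]
  apply Finset.prod_congr rfl
  intro ℓ _
  simp only [lin, eval_add, eval_mul, eval_C, eval_X]
  field_simp

lemma Mmat_eq (Xv Yv : Fin (r+1) → ℝ) (hX : ∀ i, Xv i ≠ 0) :
    Mmat r a b α β Xv Yv = Vmat r Xv Yv * Cmat r a b α β := by
  ext i j
  rw [Matrix.mul_apply]
  have hj : (j:ℕ) ≤ r := Fin.is_le j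
  have key : Mmat r a b α β Xv Yv i j = Xv i ^ r * eval (Yv i / Xv i) (qp r a b α β j) := by
    show _ = _
    unfold Mmat qp
    rw [eval_mul]
    have c1 : (Icc ((j:ℕ)+1) r).card = r - (j:ℕ) := by simp [Nat.card_Icc]
    have c2 : (Icc 1 (j:ℕ)).card = (j:ℕ) := by simp [Nat.card_Icc]
    have hr : Xv i ^ r = Xv i ^ (r - (j:ℕ)) * Xv i ^ (j:ℕ) := by
      rw [← pow_add]; congr 1; omega
    rw [Matrix.of_apply, hr, ← prod_lin_eval (Xv i) (Yv i) (hX i) _ a b,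
      ← prod_lin_eval (Xv i) (Yv i) (hX i) _ α β, c1, c2]
    ring
  rw [key, eval_eq_sum_range' (lt_of_le_of_lt (natDegree_qp r a b α β j hj) (Nat.lt_succ_self r)),
    Finset.mul_sum, ← Fin.sum_univ_eq_sum_range]
  apply Finset.sum_congr rfl
  intro k _
  show Xv i ^ r * ((qp r a b α β j).coeff k * (Yv i / Xv i) ^ (k:ℕ)) = Vmat r Xv Yv i k * Cmat r a b α β k j
  unfold Vmat Cmat
  have hk : (k:ℕ) ≤ r := Fin.is_le k
  have hr : Xv i ^ r = Xv i ^ (r - (k:ℕ)) * Xv i ^ (k:ℕ) := by rw [← pow_add]; congr 1; omega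
  have h2 : Xv i ^ (k:ℕ) * (Yv i / Xv i) ^ (k:ℕ) = Yv i ^ (k:ℕ) := by
    rw [div_pow, mul_div_assoc', mul_comm, mul_div_assoc, div_self (pow_ne_zero _ (hX i)), mul_one]
  rw [hr, ← h2]; ring

lemma det_Vmat (Xv Yv : Fin (r+1) → ℝ) (hX : ∀ i, Xv i ≠ 0) :
    (Vmat r Xv Yv).det = ∏ i, ∏ j ∈ Ioi i, (Xv i * Yv j - Xv j * Yv i) := by
  have h : Vmat r Xv Yv =
      Matrix.of (fun i k => (fun i => Xv i ^ r) i * Matrix.vandermonde (fun i => Yv i / Xv i) i k) := by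
    ext i k
    show Xv i ^ (r - (k:ℕ)) * Yv i ^ (k:ℕ) = Xv i ^ r * (Yv i / Xv i) ^ (k:ℕ)
    have hk : (k:ℕ) ≤ r := Fin.is_le k
    have hr : Xv i ^ r = Xv i ^ (r - (k:ℕ)) * Xv i ^ (k:ℕ) := by rw [← pow_add]; congr 1; omega
    have h2 : Xv i ^ (k:ℕ) * (Yv i / Xv i) ^ (k:ℕ) = Yv i ^ (k:ℕ) := by
      rw [div_pow, mul_div_assoc', mul_comm, mul_div_assoc, div_self (pow_ne_zero _ (hX i)), mul_one]
    rw [hr, ← h2]; ring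
  rw [h, Matrix.det_mul_column (fun i => Xv i ^ r), Matrix.det_vandermonde]
  have key : ∀ i : Fin (r+1), ∀ j ∈ Ioi i, Xv i * Yv j - Xv j * Yv i
      = (Xv i * Xv j) * (Yv j / Xv j - Yv i / Xv i) := by
    intro i j _
    field_simp [hX i, hX j]
  rw [Finset.prod_congr rfl (fun i _ => Finset.prod_congr rfl (key i))]
  have split : ∏ i : Fin (r+1), ∏ j ∈ Ioi i, (Xv i * Xv j) * (Yv j / Xv j - Yv i / Xv i)
      = (∏ i : Fin (r+1), ∏ j ∈ Ioi i, Xv i) * (∏ i : Fin (r+1), ∏ j ∈ Ioi i, Xv j) *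
        (∏ i : Fin (r+1), ∏ j ∈ Ioi i, (Yv j / Xv j - Yv i / Xv i)) := by
    rw [← Finset.prod_mul_distrib, ← Finset.prod_mul_distrib]
    apply Finset.prod_congr rfl
    intro i _
    rw [← Finset.prod_mul_distrib, ← Finset.prod_mul_distrib]
  rw [split]
  have h1 : (∏ i : Fin (r+1), ∏ j ∈ Ioi i, Xv i) = ∏ i : Fin (r+1), Xv i ^ (r - (i:ℕ)) := by
    apply Finset.prod_congr rfl
    intro i _
    rw [Finset.prod_const, Fin.card_Ioi]
    congr 1
  have h2 : (∏ i : Fin (r+1), ∏ j ∈ Ioi i, Xv j) = ∏ j : Fin (r+1), Xv j ^ (j:ℕ) := by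
    rw [Finset.prod_comm' (show ∀ x y : Fin (r+1), x ∈ univ ∧ y ∈ Ioi x ↔ x ∈ Iio y ∧ y ∈ (univ : Finset (Fin (r+1))) by
      simp [Finset.mem_Ioi, Finset.mem_Iio])]
    apply Finset.prod_congr rfl
    intro j _
    rw [Finset.prod_const, Fin.card_Iio]
  rw [h1, h2]
  congr 1
  rw [← Finset.prod_mul_distrib]
  apply Finset.prod_congr rfl
  intro i _
  rw [← pow_add]
  congr 1
  have := Fin.is_le i
  omega

lemma prod_fin_pairs (n : ℕ) (f : ℕ → ℕ → ℝ) :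
    ∏ i : Fin (n+1), ∏ j ∈ Ioi i, f (i:ℕ) (j:ℕ) = ∏ i ∈ range (n+1), ∏ j ∈ Icc (i+1) n, f i j := by
  rw [← Fin.prod_univ_eq_prod_range (fun i => ∏ j ∈ Icc (i+1) n, f i j)]
  apply Finset.prod_congr rfl
  intro i _
  refine Finset.prod_bij' (fun (j : Fin (n+1)) (_ : j ∈ Ioi i) => (j:ℕ))
    (fun (k : ℕ) (hk : k ∈ Icc ((i:ℕ)+1) n) => (⟨k, by simp only [Finset.mem_Icc] at hk; omega⟩ : Fin (n+1)))
    ?_ ?_ ?_ ?_ ?_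
  · intro j hj
    simp only [Finset.mem_Ioi, Fin.lt_def] at hj
    simp only [Finset.mem_Icc]
    exact ⟨by omega, Fin.is_le j⟩
  · intro k hk
    simp only [Finset.mem_Icc] at hk
    simp only [Finset.mem_Ioi, Fin.lt_def]
    omega
  · intro j hj; rfl
  · intro k hk; rfl
  · intro j hj; rfl

lemma neg_one_pow_sq (m : ℕ) : ((-1:ℝ) ^ m) ^ m = (-1:ℝ) ^ m := by
  rw [← pow_mul]
  rcases Nat.even_or_odd m with h | h
  · rw [Even.neg_one_pow (h.mul_right m), Even.neg_one_pow h]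
  · rw [Odd.neg_one_pow (h.mul h), Odd.neg_one_pow h]

lemma prod_split_bot (n : ℕ) (F : ℕ → ℝ) :
    ∏ i ∈ range (n+1), F i = F 0 * ∏ i ∈ Icc 1 n, F i := by
  rw [Finset.range_eq_Ico, Finset.prod_eq_prod_Ico_succ_bot (by omega), ← Finset.Ico_add_one_right_eq_Icc]

lemma det_Cmat (ha : ∀ j, 1 ≤ j → j ≤ r → a j ≠ 0) (hb : ∀ j, 1 ≤ j → j ≤ r → b j ≠ 0)
    (hab : ∀ i j, 1 ≤ i → i < j → j ≤ r → a i * b j - a j * b i ≠ 0) :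
    (Cmat r a b α β).det = ∏ j ∈ Icc 1 r, ∏ i ∈ Icc 1 j, (β i * a j - α i * b j) := by
  classical
  set Xn : ℕ → ℝ := fun i => if i = 0 then 1 else b i with hXn
  set Yn : ℕ → ℝ := fun i => if i = 0 then 0 else -(a i) with hYn
  set X' : Fin (r+1) → ℝ := fun i => Xn (i:ℕ) with hX'def
  set Y' : Fin (r+1) → ℝ := fun i => Yn (i:ℕ) with hY'def
  have hX : ∀ i, X' i ≠ 0 := by
    intro i
    rcases Nat.eq_zero_or_pos (i:ℕ) with h | h
    · simp only [hX'def, hXn, h, ↓reduceIte]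
      exact one_ne_zero
    · have : (i:ℕ) ≠ 0 := by omega
      simp only [hX'def, hXn, this, if_false]
      exact hb _ (by omega) (Fin.is_le i)
  have htri : (Mmat r a b α β X' Y').det = ∏ i, Mmat r a b α β X' Y' i i := by
    apply Matrix.det_of_upperTriangular
    intro i j hij
    have hij' : (j:ℕ) < (i:ℕ) := hij
    show (∏ ℓ ∈ Icc ((j:ℕ)+1) r, (a ℓ * X' i + b ℓ * Y' i)) *
      (∏ m ∈ Icc 1 (j:ℕ), (α m * X' i + β m * Y' i)) = 0
    apply mul_eq_zero_of_left
    apply Finset.prod_eq_zero (i := (i:ℕ))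
    · simp only [Finset.mem_Icc]
      exact ⟨by omega, Fin.is_le i⟩
    · have hi0 : (i:ℕ) ≠ 0 := by omega
      simp only [hX'def, hY'def, hXn, hYn, hi0, if_false]
      ring
  have hdiagN : ∏ i, Mmat r a b α β X' Y' i i
      = ∏ i ∈ range (r+1), ((∏ ℓ ∈ Icc (i+1) r, (a ℓ * Xn i + b ℓ * Yn i)) *
          ∏ m ∈ Icc 1 i, (α m * Xn i + β m * Yn i)) := by
    rw [← Fin.prod_univ_eq_prod_range (fun i => (∏ ℓ ∈ Icc (i+1) r, (a ℓ * Xn i + b ℓ * Yn i)) *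
          ∏ m ∈ Icc 1 i, (α m * Xn i + β m * Yn i))]
    rfl
  have hdetVN : (Vmat r X' Y').det
      = ∏ i ∈ range (r+1), ∏ j ∈ Icc (i+1) r, (Xn i * Yn j - Xn j * Yn i) := by
    rw [det_Vmat r X' Y' hX, ← prod_fin_pairs r (fun i j => Xn i * Yn j - Xn j * Yn i)]
  have hVne : (Vmat r X' Y').det ≠ 0 := by
    rw [hdetVN]
    apply Finset.prod_ne_zero_iff.2
    intro i hi
    apply Finset.prod_ne_zero_iff.2
    intro j hj
    simp only [Finset.mem_range] at hi
    simp only [Finset.mem_Icc] at hj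
    have hj0 : j ≠ 0 := by omega
    rcases Nat.eq_zero_or_pos i with h | h
    · subst h
      simp only [hXn, hYn, hj0, if_false, if_pos rfl]
      have := ha j (by omega) hj.2
      intro hcon
      apply this
      linarith [hcon]
    · have hi0 : i ≠ 0 := by omega
      simp only [hXn, hYn, hi0, hj0, if_false]
      have := hab i j (by omega) (by omega) hj.2
      intro hcon
      apply this
      linarith [hcon]
  have key : (∏ i ∈ range (r+1), ∏ j ∈ Icc (i+1) r, (Xn i * Yn j - Xn j * Yn i)) *
      (∏ j ∈ Icc 1 r, ∏ i ∈ Icc 1 j, (β i * a j - α i * b j))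
      = ∏ i ∈ range (r+1), ((∏ ℓ ∈ Icc (i+1) r, (a ℓ * Xn i + b ℓ * Yn i)) *
          ∏ m ∈ Icc 1 i, (α m * Xn i + β m * Yn i)) := by
    rw [prod_split_bot r (fun i => ∏ j ∈ Icc (i+1) r, (Xn i * Yn j - Xn j * Yn i)),
        prod_split_bot r (fun i => (∏ ℓ ∈ Icc (i+1) r, (a ℓ * Xn i + b ℓ * Yn i)) *
          ∏ m ∈ Icc 1 i, (α m * Xn i + β m * Yn i))]
    have e1 : ∏ j ∈ Icc (0+1) r, (Xn 0 * Yn j - Xn j * Yn 0)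
        = (-1:ℝ)^r * ∏ j ∈ Icc 1 r, a j := by
      rw [show (0+1 = 1) from rfl]
      have h1 : ∀ j ∈ Icc 1 r, Xn 0 * Yn j - Xn j * Yn 0 = (-1) * a j := by
        intro j hj
        simp only [Finset.mem_Icc] at hj
        have hj0 : j ≠ 0 := by omega
        simp only [hXn, hYn, hj0, if_false, if_pos rfl]
        ring
      rw [Finset.prod_congr rfl h1, Finset.prod_mul_distrib, Finset.prod_const, Nat.card_Icc]
      norm_num
    have e2 : (∏ ℓ ∈ Icc (0+1) r, (a ℓ * Xn 0 + b ℓ * Yn 0)) *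
        ∏ m ∈ Icc 1 0, (α m * Xn 0 + β m * Yn 0) = ∏ ℓ ∈ Icc 1 r, a ℓ := by
      rw [show (0+1 = 1) from rfl]
      have h1 : ∀ ℓ ∈ Icc 1 r, a ℓ * Xn 0 + b ℓ * Yn 0 = a ℓ := by
        intro ℓ _
        simp [hXn, hYn]
      rw [Finset.prod_congr rfl h1]
      simp
    rw [e1, e2]
    have e3 : ∀ i ∈ Icc 1 r, ∏ j ∈ Icc (i+1) r, (Xn i * Yn j - Xn j * Yn i)
        = ∏ j ∈ Icc (i+1) r, (a i * b j - a j * b i) := by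
      intro i hi
      simp only [Finset.mem_Icc] at hi
      apply Finset.prod_congr rfl
      intro j hj
      simp only [Finset.mem_Icc] at hj
      have hi0 : i ≠ 0 := by omega
      have hj0 : j ≠ 0 := by omega
      simp only [hXn, hYn, hi0, hj0, if_false]
      ring
    have e4 : ∀ i ∈ Icc 1 r, (∏ ℓ ∈ Icc (i+1) r, (a ℓ * Xn i + b ℓ * Yn i)) *
          ∏ m ∈ Icc 1 i, (α m * Xn i + β m * Yn i)
        = (-1:ℝ)^r * ((∏ ℓ ∈ Icc (i+1) r, (a i * b ℓ - a ℓ * b i)) *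
            ∏ m ∈ Icc 1 i, (β m * a i - α m * b i)) := by
      intro i hi
      simp only [Finset.mem_Icc] at hi
      have hi0 : i ≠ 0 := by omega
      have g1 : ∀ ℓ ∈ Icc (i+1) r, a ℓ * Xn i + b ℓ * Yn i = (-1) * (a i * b ℓ - a ℓ * b i) := by
        intro ℓ _
        simp only [hXn, hYn, hi0, if_false]
        ring
      have g2 : ∀ m ∈ Icc 1 i, α m * Xn i + β m * Yn i = (-1) * (β m * a i - α m * b i) := by
        intro m _
        simp only [hXn, hYn, hi0, if_false]
        ring
      rw [Finset.prod_congr rfl g1, Finset.prod_congr rfl g2,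
        Finset.prod_mul_distrib, Finset.prod_mul_distrib,
        Finset.prod_const, Finset.prod_const, Nat.card_Icc, Nat.card_Icc]
      have hpow : (-1:ℝ)^(r+1-(i+1)) * (-1:ℝ)^(i+1-1) = (-1:ℝ)^r := by
        rw [← pow_add]
        congr 1
        omega
      calc (-1:ℝ)^(r+1-(i+1)) * (∏ ℓ ∈ Icc (i+1) r, (a i * b ℓ - a ℓ * b i)) *
            ((-1:ℝ)^(i+1-1) * ∏ m ∈ Icc 1 i, (β m * a i - α m * b i))
          = ((-1:ℝ)^(r+1-(i+1)) * (-1:ℝ)^(i+1-1)) * ((∏ ℓ ∈ Icc (i+1) r, (a i * b ℓ - a ℓ * b i)) *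
            ∏ m ∈ Icc 1 i, (β m * a i - α m * b i)) := by ring
        _ = _ := by rw [hpow]
    rw [Finset.prod_congr rfl e3, Finset.prod_congr rfl e4,
      Finset.prod_mul_distrib, Finset.prod_const, Nat.card_Icc]
    have hcard : r + 1 - 1 = r := by omega
    rw [hcard, Finset.prod_mul_distrib, neg_one_pow_sq]
    ring
  have hfact := congrArg Matrix.det (Mmat_eq r a b α β X' Y' hX)
  rw [Matrix.det_mul] at hfact
  apply mul_left_cancel₀ hVne
  rw [← hfact, htri, hdiagN, hdetVN, key]

lemma main_generic (Xv Yv : Fin (r+1) → ℝ) (hX : ∀ i, Xv i ≠ 0)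
    (ha : ∀ j, 1 ≤ j → j ≤ r → a j ≠ 0) (hb : ∀ j, 1 ≤ j → j ≤ r → b j ≠ 0)
    (hab : ∀ i j, 1 ≤ i → i < j → j ≤ r → a i * b j - a j * b i ≠ 0) :
    (Mmat r a b α β Xv Yv).det =
      (∏ i, ∏ j ∈ Ioi i, (Xv i * Yv j - Xv j * Yv i)) *
      ∏ j ∈ Icc 1 r, ∏ i ∈ Icc 1 j, (β i * a j - α i * b j) := by
  rw [Mmat_eq r a b α β Xv Yv hX, Matrix.det_mul, det_Vmat r Xv Yv hX,
    det_Cmat r a b α β ha hb hab]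

lemma cont_det (av bv : ℝ → ℕ → ℝ) (Xw Yw : ℝ → Fin (r+1) → ℝ)
    (hav : ∀ ℓ, Continuous (fun t => av t ℓ)) (hbv : ∀ ℓ, Continuous (fun t => bv t ℓ))
    (hXw : ∀ i, Continuous (fun t => Xw t i)) (hYw : ∀ i, Continuous (fun t => Yw t i)) :
    Continuous fun t => (Mmat r (av t) (bv t) α β (Xw t) (Yw t)).det := by
  apply Continuous.matrix_det
  apply continuous_pi
  intro i
  apply continuous_pi
  intro j
  apply Continuous.mul
  · apply continuous_finset_prod
    intro ℓ _
    exact ((hav ℓ).mul (hXw i)).add ((hbv ℓ).mul (hYw i))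
  · apply continuous_finset_prod
    intro m _
    exact (continuous_const.mul (hXw i)).add (continuous_const.mul (hYw i))

lemma main_Xgeneric (Xv Yv : Fin (r+1) → ℝ) (hX : ∀ i, Xv i ≠ 0) :
    (Mmat r a b α β Xv Yv).det =
      (∏ i, ∏ j ∈ Ioi i, (Xv i * Yv j - Xv j * Yv i)) *
      ∏ j ∈ Icc 1 r, ∏ i ∈ Icc 1 j, (β i * a j - α i * b j) := by
  classical
  set f : ℝ → ℝ := fun t =>
    (Mmat r (fun j => a j + t) (fun j => b j + t * j) α β Xv Yv).det with hf
  set g : ℝ → ℝ := fun t => (∏ i, ∏ j ∈ Ioi i, (Xv i * Yv j - Xv j * Yv i)) *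
      ∏ j ∈ Icc 1 r, ∏ i ∈ Icc 1 j, (β i * (a j + t) - α i * (b j + t * j)) with hg
  have hfc : Continuous f := by
    apply cont_det r α β (fun t j => a j + t) (fun t j => b j + t * j) (fun _ => Xv) (fun _ => Yv)
    · intro ℓ; fun_prop
    · intro ℓ; fun_prop
    · intro i; fun_prop
    · intro i; fun_prop
  have hgc : Continuous g := by
    apply Continuous.mul continuous_const
    apply continuous_finset_prod
    intro j _
    apply continuous_finset_prod
    intro i _
    fun_prop
  have hbad : {t : ℝ | f t ≠ g t}.Finite := by
    have hBig : ((⋃ j ∈ Finset.Icc 1 r, ({t : ℝ | a j + t * 1 = 0} ∪ {t : ℝ | b j + t * (j:ℝ) = 0})) ∪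
        ⋃ j ∈ Finset.Icc 1 r, ⋃ i ∈ Finset.Ico 1 j,
          {t : ℝ | (a i * b j - a j * b i) + (a i * j + b j - a j * i - b i) * t + ((j:ℝ) - i) * t^2 = 0}).Finite := by
      apply Set.Finite.union
      · apply Set.Finite.biUnion (Finset.Icc 1 r).finite_toSet
        intro j hj
        simp only [Finset.coe_Icc, Set.mem_Icc] at hj
        apply Set.Finite.union
        · exact krat_finite_lin (a j) 1 one_ne_zero
        · exact krat_finite_lin (b j) (j:ℝ) (Nat.cast_ne_zero.mpr (by omega))
      · apply Set.Finite.biUnion (Finset.Icc 1 r).finite_toSet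
        intro j hj
        apply Set.Finite.biUnion (Finset.Ico 1 j).finite_toSet
        intro i hi
        simp only [Finset.coe_Ico, Set.mem_Ico] at hi
        apply krat_finite_quad
        have : (i:ℝ) < (j:ℝ) := by exact_mod_cast hi.2
        linarith
    apply Set.Finite.subset hBig
    intro t ht
    simp only [Set.mem_setOf_eq] at ht
    by_contra hmem
    apply ht
    simp only [Set.mem_union, Set.mem_iUnion, not_or, not_exists] at hmem
    obtain ⟨hm1, hm2⟩ := hmem
    have ha' : ∀ j, 1 ≤ j → j ≤ r → a j + t ≠ 0 := by
      intro j h1 h2 hcon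
      apply (hm1 j (by simp only [Finset.mem_Icc]; omega)).1
      simp only [Set.mem_setOf_eq]
      linarith
    have hb' : ∀ j, 1 ≤ j → j ≤ r → b j + t * j ≠ 0 := by
      intro j h1 h2 hcon
      apply (hm1 j (by simp only [Finset.mem_Icc]; omega)).2
      simp only [Set.mem_setOf_eq]
      linarith
    have hab' : ∀ i j, 1 ≤ i → i < j → j ≤ r →
        (a i + t) * (b j + t * j) - (a j + t) * (b i + t * i) ≠ 0 := by
      intro i j h1 h2 h3 hcon
      apply hm2 j (by simp only [Finset.mem_Icc]; omega) i (by simp only [Finset.mem_Ico]; omega)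
      simp only [Set.mem_setOf_eq]
      linear_combination hcon
    exact main_generic r (fun j => a j + t) (fun j => b j + t * j) α β Xv Yv hX ha' hb' hab'
  have h0 := congrFun (krat_ext_cofinite hfc hgc hbad) 0
  simp only [hf, hg] at h0
  simpa using h0

lemma main_all (Xv Yv : Fin (r+1) → ℝ) :
    (Mmat r a b α β Xv Yv).det =
      (∏ i, ∏ j ∈ Ioi i, (Xv i * Yv j - Xv j * Yv i)) *
      ∏ j ∈ Icc 1 r, ∏ i ∈ Icc 1 j, (β i * a j - α i * b j) := by
  classical
  set f : ℝ → ℝ := fun s => (Mmat r a b α β (fun i => Xv i + s) Yv).det with hf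
  set g : ℝ → ℝ := fun s => (∏ i, ∏ j ∈ Ioi i, ((Xv i + s) * Yv j - (Xv j + s) * Yv i)) *
      ∏ j ∈ Icc 1 r, ∏ i ∈ Icc 1 j, (β i * a j - α i * b j) with hg
  have hfc : Continuous f := by
    apply cont_det r α β (fun _ => a) (fun _ => b) (fun s i => Xv i + s) (fun _ => Yv)
    · intro ℓ; fun_prop
    · intro ℓ; fun_prop
    · intro i; fun_prop
    · intro i; fun_prop
  have hgc : Continuous g := by
    apply Continuous.mul _ continuous_const
    apply continuous_finset_prod
    intro i _
    apply continuous_finset_prod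
    intro j _
    fun_prop
  have hbad : {s : ℝ | f s ≠ g s}.Finite := by
    have hBig : (⋃ i : Fin (r+1), {s : ℝ | Xv i + s * 1 = 0}).Finite := by
      apply Set.finite_iUnion
      intro i
      exact krat_finite_lin (Xv i) 1 one_ne_zero
    apply Set.Finite.subset hBig
    intro s hs
    simp only [Set.mem_setOf_eq] at hs
    by_contra hmem
    apply hs
    simp only [Set.mem_iUnion, not_exists, Set.mem_setOf_eq] at hmem
    have hX : ∀ i, Xv i + s ≠ 0 := by
      intro i hcon
      apply hmem i
      linarith
    exact main_Xgeneric r a b α β (fun i => Xv i + s) Yv hX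
  have h0 := congrFun (krat_ext_cofinite hfc hgc hbad) 0
  simp only [hf, hg] at h0
  simpa using h0

end Krat
end KratMain

/-- Identity (12): bilinear form of Krattenthaler's lemma:
`det(∏_{ℓ=j+1}^{r}(a_ℓX_i+b_ℓY_i) · ∏_{m=1}^{j}(α_mX_i+β_mY_i))
  = ∏_{i<j}(X_iY_j−X_jY_i) · ∏_{1≤i≤j≤r}(β_i a_j − α_i b_j)`. -/
theorem krattenthaler_det_bilinear (r : ℕ) (a b α β : ℕ → ℝ)
    (X Y : Fin (r + 1) → ℝ) :
    Matrix.det (Matrix.of fun i j : Fin (r + 1) =>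
        (∏ ℓ ∈ Finset.Icc ((j : ℕ) + 1) r, (a ℓ * X i + b ℓ * Y i)) *
        ∏ m ∈ Finset.Icc 1 (j : ℕ), (α m * X i + β m * Y i)) =
      (∏ i : Fin (r + 1), ∏ j ∈ Finset.Ioi i, (X i * Y j - X j * Y i)) *
      ∏ j ∈ Finset.Icc 1 r, ∏ i ∈ Finset.Icc 1 j, (β i * a j - α i * b j) :=
  Krat.main_all r a b α β X Y
end
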